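/- arXiv:1306.2712 — 8 statements merged into one kernel-verified Lean document; each statement's English description precedes it below -/
import Mathlib

section
/- For any ensemble of mutually orthogonal pure states S = {(p_i, |ψ_i⟩)} and any POVM M, the optimal probability of correctly identifying the state using measurement M equals the achievable fidelity of M: P_s(M) = F(M) = Σ_a max_i { p_i ⟨ψ_i|M_a|ψ_i⟩ }. -/
open Matrix
open scoped BigOperators ComplexOrder

noncomputable section

/-- Theorem 1 (first part): for an ensemble of mutually orthogonal pure states and any
POVM `M`, the optimal success probability over decoding functions and the achievable
fidelity over guessing strategies are both equal to `∑ₐ maxᵢ pᵢ⟨ψᵢ|Mₐ|ψᵢ⟩`. -/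
theorem stmt1 (d N A : ℕ) (hN : 0 < N)
    (ψ : Fin N → (Fin d → ℂ))
    (hortho : ∀ i j, star (ψ i) ⬝ᵥ ψ j = if i = j then 1 else 0)
    (p : Fin N → ℝ) (hp : ∀ i, 0 ≤ p i) (hpsum : ∑ i, p i = 1)
    (M : Fin A → Matrix (Fin d) (Fin d) ℂ)
    (hpsd : ∀ a, (M a).PosSemidef) (hsum : ∑ a, M a = 1) :
    IsGreatest {x : ℝ | ∃ G : Fin A → Fin N,
        x = ∑ a, p (G a) * (star (ψ (G a)) ⬝ᵥ (M a).mulVec (ψ (G a))).re}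
      (∑ a, (Finset.univ.sup' (Finset.univ_nonempty_iff.mpr ⟨⟨0, hN⟩⟩)
        fun i => p i * (star (ψ i) ⬝ᵥ (M a).mulVec (ψ i)).re)) ∧
    IsGreatest {x : ℝ | ∃ φ : Fin A → (Fin d → ℂ), (∀ a, star (φ a) ⬝ᵥ φ a = 1) ∧
        x = ∑ a, ∑ i, p i * (star (ψ i) ⬝ᵥ (M a).mulVec (ψ i)).re *
          ‖star (ψ i) ⬝ᵥ φ a‖^2}
      (∑ a, (Finset.univ.sup' (Finset.univ_nonempty_iff.mpr ⟨⟨0, hN⟩⟩)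
        fun i => p i * (star (ψ i) ⬝ᵥ (M a).mulVec (ψ i)).re)) := by
  classical
  set f : Fin A → Fin N → ℝ :=
    fun a i => p i * (star (ψ i) ⬝ᵥ (M a).mulVec (ψ i)).re with hf
  have hne : (Finset.univ : Finset (Fin N)).Nonempty :=
    Finset.univ_nonempty_iff.mpr ⟨⟨0, hN⟩⟩
  have hf0 : ∀ a i, 0 ≤ f a i := by
    intro a i
    have h := (hpsd a).dotProduct_mulVec_nonneg (ψ i)
    have hre : (0:ℝ) ≤ (star (ψ i) ⬝ᵥ (M a).mulVec (ψ i)).re := by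
      have := (Complex.le_def.mp h).1
      simpa using this
    exact mul_nonneg (hp i) hre
  -- argmax function
  have hargmax : ∀ a, ∃ i : Fin N, Finset.univ.sup' hne (f a) = f a i := by
    intro a
    obtain ⟨i, _, hi⟩ := Finset.exists_mem_eq_sup' hne (f a)
    exact ⟨i, hi⟩
  choose G hG using hargmax
  have hS0 : ∀ a, 0 ≤ Finset.univ.sup' hne (f a) := fun a => (hG a) ▸ hf0 a (G a)
  constructor
  · constructor
    · exact ⟨G, Finset.sum_congr rfl fun a _ => hG a⟩
    · rintro x ⟨G', rfl⟩
      apply Finset.sum_le_sum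
      intro a _
      exact Finset.le_sup' (f a) (Finset.mem_univ (G' a))
  · constructor
    · refine ⟨fun a => ψ (G a), fun a => by simpa using hortho (G a) (G a), ?_⟩
      refine Finset.sum_congr rfl fun a _ => ?_
      rw [hG a]
      rw [Finset.sum_eq_single (G a)]
      · rw [hortho (G a) (G a)]
        simp
        rfl
      · intro i _ hi
        rw [hortho i (G a), if_neg hi]
        simp
      · simp
    · rintro x ⟨φ, hφ, rfl⟩
      apply Finset.sum_le_sum
      intro a _
      -- Bessel's inequality setup
      set ψ' : Fin N → EuclideanSpace ℂ (Fin d) := fun i => (WithLp.equiv 2 _).symm (ψ i)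
      set φ' : EuclideanSpace ℂ (Fin d) := (WithLp.equiv 2 _).symm (φ a)
      have hON : Orthonormal ℂ ψ' := by
        rw [orthonormal_iff_ite]
        intro i j
        show ψ j ⬝ᵥ star (ψ i) = _
        rw [dotProduct_comm, hortho i j]
      have hnorm : ‖φ'‖ ^ 2 = 1 := by
        have h1 : inner ℂ φ' φ' = 1 := by
          show φ a ⬝ᵥ star (φ a) = 1
          rw [dotProduct_comm, hφ a]
        have := inner_self_eq_norm_sq (𝕜 := ℂ) φ'
        rw [h1] at this
        simpa using this.symm
      have hbessel : ∑ i, ‖inner ℂ (ψ' i) φ'‖ ^ 2 ≤ 1 := by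
        have := hON.sum_inner_products_le (s := Finset.univ) φ'
        rwa [hnorm] at this
      have hw : ∀ i, ‖star (ψ i) ⬝ᵥ φ a‖^2 = ‖inner ℂ (ψ' i) φ'‖ ^ 2 := by
        intro i
        show _ = ‖φ a ⬝ᵥ star (ψ i)‖ ^ 2
        rw [dotProduct_comm]
      calc ∑ i, f a i * ‖star (ψ i) ⬝ᵥ φ a‖^2
          ≤ ∑ i, Finset.univ.sup' hne (f a) * ‖inner ℂ (ψ' i) φ'‖ ^ 2 := by
            apply Finset.sum_le_sum
            intro i _
            rw [hw i]
            exact mul_le_mul_of_nonneg_right (Finset.le_sup' (f a) (Finset.mem_univ i))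
              (by positivity)
        _ = Finset.univ.sup' hne (f a) * ∑ i, ‖inner ℂ (ψ' i) φ'‖ ^ 2 := by
            rw [Finset.mul_sum]
        _ ≤ Finset.univ.sup' hne (f a) * 1 :=
            mul_le_mul_of_nonneg_left hbessel (hS0 a)
        _ = Finset.univ.sup' hne (f a) := mul_one _
end
end

section
/- Let |ψ⟩ ∈ ℂ^{d₁} ⊗ ℂ^{d₂} be a unit vector with largest Schmidt coefficient √λ₁. If T is an operator with 0 ≤ T ≤ I whose partial transpose is positive semidefinite, then ⟨ψ|T|ψ⟩ ≤ λ₁ · Tr(T). -/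
open Matrix
open scoped BigOperators ComplexOrder

noncomputable section

/-- Partial transpose on the second tensor factor: `(A ⊗ B) ↦ A ⊗ Bᵀ`. -/
def ptrans {d₁ d₂ : ℕ} (T : Matrix (Fin d₁ × Fin d₂) (Fin d₁ × Fin d₂) ℂ) :
    Matrix (Fin d₁ × Fin d₂) (Fin d₁ × Fin d₂) ℂ :=
  fun x y => T (x.1, y.2) (y.1, x.2)

/-- Reduced density matrix of `|ψ⟩⟨ψ|` on the first factor (partial trace over the second). -/
def red₁ {d₁ d₂ : ℕ} (ψ : Fin d₁ × Fin d₂ → ℂ) : Matrix (Fin d₁) (Fin d₁) ℂ :=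
  fun i i' => ∑ j, ψ (i, j) * star (ψ (i', j))

-- trace of PSD matrix has nonneg real part
lemma psd_trace_re_nonneg {n : Type*} [Fintype n] [DecidableEq n] {M : Matrix n n ℂ}
    (hM : M.PosSemidef) : 0 ≤ M.trace.re := by
  have h : ∀ i, 0 ≤ (M i i).re := by
    intro i
    have := hM.re_dotProduct_nonneg (Pi.single i 1)
    simpa [Matrix.mulVec_single, dotProduct, Pi.single_apply, Finset.sum_ite_eq] using this
  rw [Matrix.trace]
  rw [Complex.re_sum]
  exact Finset.sum_nonneg fun i _ => h i

lemma psd_trace_mul_re_nonneg {n : Type*} [Fintype n] [DecidableEq n] {A B : Matrix n n ℂ}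
    (hA : A.PosSemidef) (hB : B.PosSemidef) : 0 ≤ (A * B).trace.re := by
  obtain ⟨C, rfl⟩ : ∃ C : Matrix n n ℂ, A = Cᴴ * C := by
    open scoped MatrixOrder in
    obtain ⟨X, hX, -, hXA⟩ := CFC.exists_sqrt_of_isSelfAdjoint_of_quasispectrumRestricts
      hA.isHermitian (QuasispectrumRestricts.nnreal_of_nonneg hA.nonneg)
    exact ⟨X, by rw [← hXA]; exact congrArg (· * X) hX.symm⟩
  rw [Matrix.mul_assoc, Matrix.trace_mul_comm]
  exact psd_trace_re_nonneg (hB.mul_mul_conjTranspose_same C)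

def outerM {d₁ d₂ : ℕ} (ψ : Fin d₁ × Fin d₂ → ℂ) :
    Matrix (Fin d₁ × Fin d₂) (Fin d₁ × Fin d₂) ℂ :=
  Matrix.of fun x y => ψ x * (starRingEnd ℂ) (ψ y)

def swapE (d₁ d₂ : ℕ) : ((Fin d₁ × Fin d₂) × (Fin d₁ × Fin d₂)) ≃
    ((Fin d₁ × Fin d₂) × (Fin d₁ × Fin d₂)) where
  toFun p := ((p.1.1, p.2.2), (p.2.1, p.1.2))
  invFun p := ((p.1.1, p.2.2), (p.2.1, p.1.2))
  left_inv p := rfl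
  right_inv p := rfl

lemma trace_ptrans {d₁ d₂ : ℕ} (T : Matrix (Fin d₁ × Fin d₂) (Fin d₁ × Fin d₂) ℂ) :
    (ptrans T).trace = T.trace := by
  simp [Matrix.trace, ptrans, Matrix.diag]

lemma trace_mul_eq_sum {n : Type*} [Fintype n] (X Y : Matrix n n ℂ) :
    (X * Y).trace = ∑ p : n × n, X p.1 p.2 * Y p.2 p.1 := by
  rw [Fintype.sum_prod_type]
  simp [Matrix.trace, Matrix.diag, Matrix.mul_apply]

lemma trace_ptrans_mul {d₁ d₂ : ℕ} (A B : Matrix (Fin d₁ × Fin d₂) (Fin d₁ × Fin d₂) ℂ) :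
    (ptrans A * ptrans B).trace = (A * B).trace := by
  rw [trace_mul_eq_sum, trace_mul_eq_sum]
  exact Fintype.sum_equiv (swapE d₁ d₂) _ _ (fun p => rfl)

lemma dot_eq_trace {d₁ d₂ : ℕ} (ψ : Fin d₁ × Fin d₂ → ℂ)
    (T : Matrix (Fin d₁ × Fin d₂) (Fin d₁ × Fin d₂) ℂ) :
    star ψ ⬝ᵥ T *ᵥ ψ = (T * outerM ψ).trace := by
  rw [trace_mul_eq_sum, Fintype.sum_prod_type]
  simp only [dotProduct, Matrix.mulVec, dotProduct, Pi.star_apply,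
    Finset.mul_sum, outerM, Matrix.of_apply]
  refine Finset.sum_congr rfl fun x _ => Finset.sum_congr rfl fun y _ => ?_
  simp only [RCLike.star_def]
  ring

lemma rayleigh_eq {d₁ d₂ : ℕ} (ψ : Fin d₁ × Fin d₂ → ℂ) (u : Fin d₁ → ℂ) :
    star u ⬝ᵥ (red₁ ψ) *ᵥ u = ∑ j, (∑ a, (starRingEnd ℂ) (u a) * ψ (a, j)) *
      (starRingEnd ℂ) (∑ a, (starRingEnd ℂ) (u a) * ψ (a, j)) := by
  simp only [dotProduct, Matrix.mulVec, red₁, Pi.star_apply, RCLike.star_def,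
    map_sum, _root_.map_mul, Complex.conj_conj, Finset.mul_sum, Finset.sum_mul]
  rw [Finset.sum_comm]
  refine Eq.trans (Finset.sum_congr rfl fun y _ => Finset.sum_comm) ?_
  rw [Finset.sum_comm]
  exact Finset.sum_congr rfl fun j _ => Finset.sum_congr rfl fun a' _ =>
    Finset.sum_congr rfl fun a _ => by ring

lemma rayleigh_re {d₁ d₂ : ℕ} (ψ : Fin d₁ × Fin d₂ → ℂ) (u : Fin d₁ → ℂ) :
    (star u ⬝ᵥ (red₁ ψ) *ᵥ u).re
      = ∑ j, Complex.normSq (∑ a, (starRingEnd ℂ) (u a) * ψ (a, j)) := by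
  rw [rayleigh_eq, Complex.re_sum]
  exact Finset.sum_congr rfl fun j _ => by rw [Complex.mul_conj, Complex.ofReal_re]

lemma rayleigh_bound {d₁ d₂ : ℕ} (ψ : Fin d₁ × Fin d₂ → ℂ) (lam₁ : ℝ)
    (hub : ∀ x ∈ {x : ℝ | ∃ v : Fin d₁ → ℂ, star v ⬝ᵥ v = 1 ∧
        x = (star v ⬝ᵥ (red₁ ψ).mulVec v).re}, x ≤ lam₁)
    (u : Fin d₁ → ℂ) :
    ∑ j, Complex.normSq (∑ a, (starRingEnd ℂ) (u a) * ψ (a, j))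
      ≤ lam₁ * ∑ a, Complex.normSq (u a) := by
  set s : ℝ := ∑ a, Complex.normSq (u a) with hs_def
  have hs0 : 0 ≤ s := Finset.sum_nonneg fun a _ => Complex.normSq_nonneg _
  rcases eq_or_lt_of_le hs0 with hs | hs
  · -- s = 0, so u = 0
    have hu : ∀ a, u a = 0 := by
      intro a
      have := (Finset.sum_eq_zero_iff_of_nonneg
        (fun a _ => Complex.normSq_nonneg (u a))).mp hs.symm a (Finset.mem_univ a)
      exact Complex.normSq_eq_zero.mp this
    simp [hu, ← hs]
  · set t : ℝ := (Real.sqrt s)⁻¹ with ht_def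
    have hts : t * t * s = 1 := by
      rw [ht_def, ← mul_inv, Real.mul_self_sqrt hs0]
      exact inv_mul_cancel₀ (ne_of_gt hs)
    set u' : Fin d₁ → ℂ := fun a => (t : ℂ) * u a with hu'_def
    have hunit : star u' ⬝ᵥ u' = 1 := by
      have : star u' ⬝ᵥ u' = ((∑ a, Complex.normSq (u' a) : ℝ) : ℂ) := by
        rw [Complex.ofReal_sum]
        simp only [dotProduct, Pi.star_apply, RCLike.star_def]
        exact Finset.sum_congr rfl fun a _ => by
          rw [mul_comm, Complex.mul_conj]
      rw [this]
      have : ∑ a, Complex.normSq (u' a) = t * t * s := by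
        simp only [hu'_def, Complex.normSq_mul, Complex.normSq_ofReal, hs_def,
          Finset.mul_sum]
      rw [this, hts, Complex.ofReal_one]
    have hmem : (star u' ⬝ᵥ (red₁ ψ).mulVec u' ).re ∈
        {x : ℝ | ∃ v : Fin d₁ → ℂ, star v ⬝ᵥ v = 1 ∧
          x = (star v ⬝ᵥ (red₁ ψ).mulVec v).re} := ⟨u', hunit, rfl⟩
    have hle := hub _ hmem
    rw [rayleigh_re] at hle
    have hscale : ∀ j, Complex.normSq (∑ a, (starRingEnd ℂ) (u' a) * ψ (a, j))
        = (t * t) * Complex.normSq (∑ a, (starRingEnd ℂ) (u a) * ψ (a, j)) := by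
      intro j
      have : (∑ a, (starRingEnd ℂ) (u' a) * ψ (a, j))
          = (t : ℂ) * ∑ a, (starRingEnd ℂ) (u a) * ψ (a, j) := by
        rw [Finset.mul_sum]
        exact Finset.sum_congr rfl fun a _ => by
          simp only [hu'_def, _root_.map_mul, Complex.conj_ofReal]; ring
      rw [this, Complex.normSq_mul, Complex.normSq_ofReal]
    rw [Finset.sum_congr rfl fun j _ => hscale j, ← Finset.mul_sum] at hle
    set L : ℝ := ∑ j, Complex.normSq (∑ a, (starRingEnd ℂ) (u a) * ψ (a, j)) with hL_def
    have h2 : s * ((t * t) * L) ≤ s * lam₁ := mul_le_mul_of_nonneg_left hle hs0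
    have h3 : s * ((t * t) * L) = L := by
      rw [show s * ((t * t) * L) = (t * t * s) * L by ring, hts, one_mul]
    linarith

lemma lam_nonneg {d₁ d₂ : ℕ} (ψ : Fin d₁ × Fin d₂ → ℂ) (lam₁ : ℝ)
    (hmem : lam₁ ∈ {x : ℝ | ∃ v : Fin d₁ → ℂ, star v ⬝ᵥ v = 1 ∧
      x = (star v ⬝ᵥ (red₁ ψ).mulVec v).re}) : 0 ≤ lam₁ := by
  obtain ⟨v, -, hv⟩ := hmem
  rw [hv, rayleigh_re]
  exact Finset.sum_nonneg fun j _ => Complex.normSq_nonneg _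

lemma cs_bound {n : ℕ} (f g : Fin n → ℂ) :
    ‖∑ j, f j * g j‖ ≤
      Real.sqrt (∑ j, Complex.normSq (f j)) * Real.sqrt (∑ j, Complex.normSq (g j)) := by
  let x : EuclideanSpace ℂ (Fin n) := (WithLp.equiv 2 _).symm (fun j => (starRingEnd ℂ) (f j))
  let y : EuclideanSpace ℂ (Fin n) := (WithLp.equiv 2 _).symm g
  have hinner : inner ℂ x y = ∑ j, f j * g j := by
    simp only [PiLp.inner_apply, RCLike.inner_apply, x, y]
    exact Finset.sum_congr rfl fun j _ => by
      show g j * (starRingEnd ℂ) ((starRingEnd ℂ) (f j)) = f j * g j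
      rw [Complex.conj_conj, mul_comm]
  have hnx : ‖x‖ = Real.sqrt (∑ j, Complex.normSq (f j)) := by
    rw [EuclideanSpace.norm_eq]
    congr 1
    refine Finset.sum_congr rfl fun j _ => ?_
    show ‖(starRingEnd ℂ) (f j)‖ ^ 2 = _
    rw [Complex.sq_norm, Complex.normSq_conj]
  have hny : ‖y‖ = Real.sqrt (∑ j, Complex.normSq (g j)) := by
    rw [EuclideanSpace.norm_eq]
    congr 1
    refine Finset.sum_congr rfl fun j _ => ?_
    show ‖g j‖ ^ 2 = _
    rw [Complex.sq_norm]
  calc ‖∑ j, f j * g j‖ = ‖inner ℂ x y‖ := by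
        rw [hinner]
    _ ≤ ‖x‖ * ‖y‖ := norm_inner_le_norm x y
    _ = _ := by rw [hnx, hny]

lemma op_bound {d₁ d₂ : ℕ} (ψ : Fin d₁ × Fin d₂ → ℂ) (lam₁ : ℝ)
    (hub : ∀ x ∈ {x : ℝ | ∃ v : Fin d₁ → ℂ, star v ⬝ᵥ v = 1 ∧
        x = (star v ⬝ᵥ (red₁ ψ).mulVec v).re}, x ≤ lam₁)
    (hlam0 : 0 ≤ lam₁) (w : Fin d₂ → ℂ) :
    ∑ a, Complex.normSq (∑ j, ψ (a, j) * w j) ≤ lam₁ * ∑ j, Complex.normSq (w j) := by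
  set u : Fin d₁ → ℂ := fun a => ∑ j, ψ (a, j) * w j with hu_def
  set L : ℝ := ∑ a, Complex.normSq (u a) with hL_def
  set W : ℝ := ∑ j, Complex.normSq (w j) with hW_def
  have hL0 : 0 ≤ L := Finset.sum_nonneg fun a _ => Complex.normSq_nonneg _
  have hW0 : 0 ≤ W := Finset.sum_nonneg fun j _ => Complex.normSq_nonneg _
  have key : ((L : ℝ) : ℂ) = ∑ j, (∑ a, (starRingEnd ℂ) (u a) * ψ (a, j)) * w j := by
    calc ((L : ℝ) : ℂ) = ∑ a, (starRingEnd ℂ) (u a) * u a := by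
          rw [hL_def, Complex.ofReal_sum]
          exact Finset.sum_congr rfl fun a _ => by rw [mul_comm, Complex.mul_conj]
      _ = ∑ a, ∑ j, (starRingEnd ℂ) (u a) * ψ (a, j) * w j := by
          refine Finset.sum_congr rfl fun a _ => ?_
          conv_lhs => rw [hu_def]
          rw [Finset.mul_sum]
          exact Finset.sum_congr rfl fun j _ => by ring
      _ = ∑ j, (∑ a, (starRingEnd ℂ) (u a) * ψ (a, j)) * w j := by
          rw [Finset.sum_comm]
          exact Finset.sum_congr rfl fun j _ => by rw [Finset.sum_mul]
  have hCS : L ≤ Real.sqrt (lam₁ * L) * Real.sqrt W := by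
    have h1 : L = ‖((L : ℝ) : ℂ)‖ := by
      rw [Complex.norm_real, Real.norm_eq_abs, abs_of_nonneg hL0]
    have h2 := cs_bound (fun j => ∑ a, (starRingEnd ℂ) (u a) * ψ (a, j)) w
    rw [← key] at h2
    have h3 : Real.sqrt (∑ j, Complex.normSq (∑ a, (starRingEnd ℂ) (u a) * ψ (a, j)))
        ≤ Real.sqrt (lam₁ * L) :=
      Real.sqrt_le_sqrt (rayleigh_bound ψ lam₁ hub u)
    calc L = ‖((L : ℝ) : ℂ)‖ := h1
      _ ≤ _ := h2
      _ ≤ Real.sqrt (lam₁ * L) * Real.sqrt W :=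
          mul_le_mul_of_nonneg_right h3 (Real.sqrt_nonneg _)
  have hsq : L * L ≤ lam₁ * L * W := by
    have h4 : L * L ≤ (Real.sqrt (lam₁ * L) * Real.sqrt W) * (Real.sqrt (lam₁ * L) * Real.sqrt W) :=
      mul_le_mul hCS hCS hL0 (by positivity)
    calc L * L ≤ _ := h4
      _ = (Real.sqrt (lam₁ * L) * Real.sqrt (lam₁ * L)) * (Real.sqrt W * Real.sqrt W) := by ring
      _ = (lam₁ * L) * W := by
          rw [Real.mul_self_sqrt (by positivity), Real.mul_self_sqrt hW0]
  rcases eq_or_lt_of_le hL0 with hL | hL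
  · rw [← hL]; positivity
  · nlinarith [hsq, hL]

lemma Q_eq {d₁ d₂ : ℕ} (ψ v : Fin d₁ × Fin d₂ → ℂ) :
    (∑ x : Fin d₁ × Fin d₂, ∑ y : Fin d₁ × Fin d₂,
        (starRingEnd ℂ) (v x) * (ψ (x.1, y.2) * (starRingEnd ℂ) (ψ (y.1, x.2))) * v y)
      = ∑ a, ∑ b, (∑ j, ψ (a, j) * v (b, j)) *
          (starRingEnd ℂ) (∑ j, ψ (b, j) * v (a, j)) := by
  simp only [Fintype.sum_prod_type, map_sum, _root_.map_mul, Finset.sum_mul_sum]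
  refine Finset.sum_congr rfl fun a _ => ?_
  rw [Finset.sum_comm]
  refine Eq.trans (Finset.sum_congr rfl fun b _ => Finset.sum_comm) ?_
  exact Finset.sum_congr rfl fun b _ => Finset.sum_congr rfl fun j _ =>
    Finset.sum_congr rfl fun k _ => by ring

lemma re_mul_conj_le (z w : ℂ) :
    (z * (starRingEnd ℂ) w).re ≤ (Complex.normSq z + Complex.normSq w) / 2 := by
  have h1 : (z * (starRingEnd ℂ) w).re ≤ ‖z * (starRingEnd ℂ) w‖ :=
    Complex.re_le_norm _
  rw [norm_mul, Complex.norm_conj] at h1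
  nlinarith [h1, Complex.sq_norm z, Complex.sq_norm w,
    sq_nonneg (‖z‖ - ‖w‖)]

lemma Q_re_le {d₁ d₂ : ℕ} (ψ v : Fin d₁ × Fin d₂ → ℂ) (lam₁ : ℝ)
    (hub : ∀ x ∈ {x : ℝ | ∃ v : Fin d₁ → ℂ, star v ⬝ᵥ v = 1 ∧
        x = (star v ⬝ᵥ (red₁ ψ).mulVec v).re}, x ≤ lam₁)
    (hlam0 : 0 ≤ lam₁) :
    (∑ x : Fin d₁ × Fin d₂, ∑ y : Fin d₁ × Fin d₂,
        (starRingEnd ℂ) (v x) * (ψ (x.1, y.2) * (starRingEnd ℂ) (ψ (y.1, x.2))) * v y).re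
      ≤ lam₁ * ∑ x : Fin d₁ × Fin d₂, Complex.normSq (v x) := by
  rw [Q_eq]
  set Bm : Fin d₁ → Fin d₁ → ℂ := fun a b => ∑ j, ψ (a, j) * v (b, j) with hBm
  have step1 : (∑ a, ∑ b, Bm a b * (starRingEnd ℂ) (Bm b a)).re
      ≤ ∑ a, ∑ b, Complex.normSq (Bm a b) := by
    rw [Complex.re_sum]
    have h1 : ∀ a, (∑ b, Bm a b * (starRingEnd ℂ) (Bm b a)).re
        = ∑ b, (Bm a b * (starRingEnd ℂ) (Bm b a)).re := fun a => Complex.re_sum _ _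
    rw [Finset.sum_congr rfl fun a _ => h1 a]
    have h2 : ∑ a, ∑ b, (Bm a b * (starRingEnd ℂ) (Bm b a)).re
        ≤ ∑ a, ∑ b, (Complex.normSq (Bm a b) + Complex.normSq (Bm b a)) / 2 :=
      Finset.sum_le_sum fun a _ => Finset.sum_le_sum fun b _ => re_mul_conj_le _ _
    refine h2.trans (le_of_eq ?_)
    have h3 : ∑ a, ∑ b, (Complex.normSq (Bm a b) + Complex.normSq (Bm b a)) / 2
        = ((∑ a, ∑ b, Complex.normSq (Bm a b)) + (∑ a, ∑ b, Complex.normSq (Bm b a))) / 2 := by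
      rw [← Finset.sum_add_distrib, Finset.sum_div]
      refine Finset.sum_congr rfl fun a _ => ?_
      rw [← Finset.sum_add_distrib, Finset.sum_div]
    rw [h3, Finset.sum_comm (f := fun a b => Complex.normSq (Bm b a))]
    ring
  refine step1.trans ?_
  rw [Finset.sum_comm]
  calc ∑ b, ∑ a, Complex.normSq (Bm a b)
      ≤ ∑ b, lam₁ * ∑ j, Complex.normSq (v (b, j)) :=
        Finset.sum_le_sum fun b _ => op_bound ψ lam₁ hub hlam0 (fun j => v (b, j))
    _ = lam₁ * ∑ x : Fin d₁ × Fin d₂, Complex.normSq (v x) := by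
        rw [← Finset.mul_sum, Fintype.sum_prod_type]

lemma sigma_herm {d₁ d₂ : ℕ} (ψ : Fin d₁ × Fin d₂ → ℂ) : (ptrans (outerM ψ)).IsHermitian := by
  show (ptrans (outerM ψ))ᴴ = ptrans (outerM ψ)
  ext x y
  simp only [Matrix.conjTranspose_apply, ptrans, outerM, Matrix.of_apply, star_mul',
    RCLike.star_def, Complex.conj_conj]
  ring

lemma Mmat_herm {d₁ d₂ : ℕ} (ψ : Fin d₁ × Fin d₂ → ℂ) (lam₁ : ℝ) :
    ((lam₁ : ℂ) • (1 : Matrix (Fin d₁ × Fin d₂) (Fin d₁ × Fin d₂) ℂ)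
      - ptrans (outerM ψ)).IsHermitian := by
  refine Matrix.IsHermitian.sub ?_ (sigma_herm ψ)
  show ((lam₁ : ℂ) • (1 : Matrix (Fin d₁ × Fin d₂) (Fin d₁ × Fin d₂) ℂ))ᴴ = _
  rw [Matrix.conjTranspose_smul, Matrix.isHermitian_one.eq, Complex.star_def,
    Complex.conj_ofReal]

lemma herm_quadform_im {n : Type*} [Fintype n] (M : Matrix n n ℂ) (hM : M.IsHermitian)
    (v : n → ℂ) : (star v ⬝ᵥ M *ᵥ v).im = 0 := by
  rw [← Complex.conj_eq_iff_im]
  conv_lhs => rw [Matrix.star_dotProduct]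
  rw [starRingEnd_apply, star_star, Matrix.star_mulVec, ← Matrix.dotProduct_mulVec, hM.eq]

lemma Mmat_psd {d₁ d₂ : ℕ} (ψ : Fin d₁ × Fin d₂ → ℂ) (lam₁ : ℝ)
    (hub : ∀ x ∈ {x : ℝ | ∃ v : Fin d₁ → ℂ, star v ⬝ᵥ v = 1 ∧
        x = (star v ⬝ᵥ (red₁ ψ).mulVec v).re}, x ≤ lam₁) (hlam0 : 0 ≤ lam₁) :
    ((lam₁ : ℂ) • (1 : Matrix (Fin d₁ × Fin d₂) (Fin d₁ × Fin d₂) ℂ)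
      - ptrans (outerM ψ)).PosSemidef := by
  refine PosSemidef.of_dotProduct_mulVec_nonneg (Mmat_herm ψ lam₁) fun v => ?_
  rw [Complex.le_def]
  refine ⟨?_, ?_⟩
  · rw [Complex.zero_re]
    have hq : star v ⬝ᵥ ((lam₁ : ℂ) • 1 - ptrans (outerM ψ)) *ᵥ v
        = (lam₁ : ℂ) * (star v ⬝ᵥ v) - star v ⬝ᵥ (ptrans (outerM ψ)) *ᵥ v := by
      rw [Matrix.sub_mulVec, dotProduct_sub, Matrix.smul_mulVec,
        Matrix.one_mulVec, dotProduct_smul, smul_eq_mul]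
    rw [hq, Complex.sub_re]
    have hvv : star v ⬝ᵥ v = ((∑ x, Complex.normSq (v x) : ℝ) : ℂ) := by
      rw [Complex.ofReal_sum]
      exact Finset.sum_congr rfl fun x _ => by
        simp only [Pi.star_apply, RCLike.star_def]
        rw [mul_comm, Complex.mul_conj]
    have hQ : star v ⬝ᵥ (ptrans (outerM ψ)) *ᵥ v
        = ∑ x : Fin d₁ × Fin d₂, ∑ y : Fin d₁ × Fin d₂,
            (starRingEnd ℂ) (v x) * (ψ (x.1, y.2) * (starRingEnd ℂ) (ψ (y.1, x.2))) * v y := by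
      simp only [dotProduct, Matrix.mulVec, Pi.star_apply,
        RCLike.star_def, ptrans, outerM, Matrix.of_apply, Finset.mul_sum]
      exact Finset.sum_congr rfl fun x _ => Finset.sum_congr rfl fun y _ => by ring
    rw [hvv, hQ]
    have hb := Q_re_le ψ v lam₁ hub hlam0
    have hre : ((lam₁ : ℂ) * ((∑ x, Complex.normSq (v x) : ℝ) : ℂ)).re
        = lam₁ * ∑ x, Complex.normSq (v x) := by
      rw [← Complex.ofReal_mul, Complex.ofReal_re]
    rw [hre]
    linarith
  · exact (herm_quadform_im _ (Mmat_herm ψ lam₁) v).symm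

/-- Lemma 2 (first part): if `λ₁` is the largest eigenvalue of the reduced density
matrix of a bipartite unit vector `|ψ⟩` (characterized as the maximal Rayleigh
quotient), and `T` is a measurement operator `0 ≤ T ≤ I` with positive partial
transpose, then `⟨ψ|T|ψ⟩ ≤ λ₁ Tr T`. -/
theorem stmt4 (d₁ d₂ : ℕ) (ψ : Fin d₁ × Fin d₂ → ℂ) (hψ : star ψ ⬝ᵥ ψ = 1)
    (lam₁ : ℝ)
    (hlam : IsGreatest {x : ℝ | ∃ v : Fin d₁ → ℂ, star v ⬝ᵥ v = 1 ∧
        x = (star v ⬝ᵥ (red₁ ψ).mulVec v).re} lam₁)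
    (T : Matrix (Fin d₁ × Fin d₂) (Fin d₁ × Fin d₂) ℂ)
    (hT : T.PosSemidef) (hTI : (1 - T).PosSemidef)
    (hPT : (ptrans T).PosSemidef) :
    (star ψ ⬝ᵥ T.mulVec ψ).re ≤ lam₁ * T.trace.re := by
  have hlam0 : 0 ≤ lam₁ := lam_nonneg ψ lam₁ hlam.1
  have hMpsd := Mmat_psd ψ lam₁ hlam.2 hlam0
  have h0 : 0 ≤ ((ptrans T) * ((lam₁ : ℂ) • 1 - ptrans (outerM ψ))).trace.re :=
    psd_trace_mul_re_nonneg hPT hMpsd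
  have hexp : ((ptrans T) * ((lam₁ : ℂ) • 1 - ptrans (outerM ψ))).trace
      = (lam₁ : ℂ) * T.trace - star ψ ⬝ᵥ T *ᵥ ψ := by
    rw [Matrix.mul_sub, Matrix.trace_sub, Matrix.mul_smul, Matrix.mul_one, Matrix.trace_smul,
      trace_ptrans, trace_ptrans_mul, ← dot_eq_trace, smul_eq_mul]
  rw [hexp, Complex.sub_re] at h0
  have : ((lam₁ : ℂ) * T.trace).re = lam₁ * T.trace.re := by
    simp [Complex.mul_re]
  linarith [h0, this.symm.le]
end
end

section
/- Let S = {(p_i, |ψ_i⟩)} be an ensemble of pure states in ℂ^{d₁} ⊗ ℂ^{d₂} with d₁ ≤ d₂, and let λ_i be the square of the largest Schmidt coefficient of |ψ_i⟩. Then the separable fidelity satisfies F_S ≤ d₁·d₂·‖Λ‖_∞, where Λ = Σ_i p_i λ_i |ψ_i⟩⟨ψ_i| and ‖·‖_∞ is the operator norm. -/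
open Matrix
open scoped BigOperators ComplexOrder

noncomputable section

/-- Product vector `|a⟩⊗|b⟩` in `ℂ^{d₁} ⊗ ℂ^{d₂}`. -/
def prodv {d₁ d₂ : ℕ} (a : Fin d₁ → ℂ) (b : Fin d₂ → ℂ) : Fin d₁ × Fin d₂ → ℂ :=
  fun y => a y.1 * b y.2

lemma star_dot_self {n : ℕ} (v : Fin n → ℂ) :
    star v ⬝ᵥ v = ((∑ j, Complex.normSq (v j) : ℝ) : ℂ) := by
  push_cast
  simp [dotProduct, Complex.normSq_eq_conj_mul_self]

lemma prodv_smul {d₁ d₂ : ℕ} (c c' : ℂ) (a : Fin d₁ → ℂ) (b : Fin d₂ → ℂ) :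
    prodv (c • a) (c' • b) = (c * c') • prodv a b := by
  funext y; simp [prodv]; ring

example (z : ℂ) : ‖z‖ ^ 2 = Complex.normSq z := Complex.sq_norm z

-- normalized vector is unit
lemma unit_normalize {n : ℕ} (v : Fin n → ℂ) (h : (∑ j, Complex.normSq (v j) : ℝ) ≠ 0) :
    star ((((Real.sqrt (∑ j, Complex.normSq (v j)))⁻¹ : ℝ) : ℂ) • v) ⬝ᵥ
      ((((Real.sqrt (∑ j, Complex.normSq (v j)))⁻¹ : ℝ) : ℂ) • v) = 1 := by
  set S := (∑ j, Complex.normSq (v j) : ℝ) with hS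
  have hSnn : 0 ≤ S := Finset.sum_nonneg fun j _ => Complex.normSq_nonneg _
  rw [star_dot_self]
  have : ∀ j, Complex.normSq (((((Real.sqrt S)⁻¹ : ℝ) : ℂ) • v) j)
      = (Real.sqrt S)⁻¹ ^ 2 * Complex.normSq (v j) := by
    intro j
    simp [Complex.normSq_mul, Complex.normSq_ofReal, sq]
  rw [Finset.sum_congr rfl fun j _ => this j, ← Finset.mul_sum, ← hS]
  have : (Real.sqrt S)⁻¹ ^ 2 * S = 1 := by
    rw [← Real.sqrt_inv, Real.sq_sqrt (by positivity), inv_mul_cancel₀ h]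
  rw [this, Complex.ofReal_one]

lemma overlap_bound {d₁ d₂ : ℕ} (ψ : Fin d₁ × Fin d₂ → ℂ) (lam : ℝ)
    (hg : IsGreatest {x : ℝ | ∃ (a : Fin d₁ → ℂ) (b : Fin d₂ → ℂ),
        star a ⬝ᵥ a = 1 ∧ star b ⬝ᵥ b = 1 ∧
        x = (‖star ψ ⬝ᵥ prodv a b‖)^2} lam)
    (χ₁ : Fin d₁ → ℂ) (χ₂ : Fin d₂ → ℂ) :
    (‖star ψ ⬝ᵥ prodv χ₁ χ₂‖)^2
      ≤ lam * (∑ j, Complex.normSq (χ₁ j)) * (∑ j, Complex.normSq (χ₂ j)) := by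
  have hlam0 : 0 ≤ lam := by
    obtain ⟨a, b, _, _, hx⟩ := hg.1
    rw [hx] at *; positivity
  set S₁ := (∑ j, Complex.normSq (χ₁ j) : ℝ) with hS₁
  set S₂ := (∑ j, Complex.normSq (χ₂ j) : ℝ) with hS₂
  have hS₁nn : 0 ≤ S₁ := Finset.sum_nonneg fun j _ => Complex.normSq_nonneg _
  have hS₂nn : 0 ≤ S₂ := Finset.sum_nonneg fun j _ => Complex.normSq_nonneg _
  by_cases h₁ : S₁ = 0
  · have : χ₁ = 0 := by
      funext j
      have := (Finset.sum_eq_zero_iff_of_nonneg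
        (fun j _ => Complex.normSq_nonneg (χ₁ j))).1 h₁ j (Finset.mem_univ j)
      exact Complex.normSq_eq_zero.1 this
    subst this
    have : prodv (0 : Fin d₁ → ℂ) χ₂ = 0 := by funext y; simp [prodv]
    rw [this]
    simp [hlam0, mul_nonneg, hS₂nn, mul_nonneg hlam0 hS₁nn]
  by_cases h₂ : S₂ = 0
  · have : χ₂ = 0 := by
      funext j
      have := (Finset.sum_eq_zero_iff_of_nonneg
        (fun j _ => Complex.normSq_nonneg (χ₂ j))).1 h₂ j (Finset.mem_univ j)
      exact Complex.normSq_eq_zero.1 this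
    subst this
    have : prodv χ₁ (0 : Fin d₂ → ℂ) = 0 := by funext y; simp [prodv]
    rw [this]
    simp
    positivity
  · set r₁ := (Real.sqrt S₁)⁻¹ with hr₁
    set r₂ := (Real.sqrt S₂)⁻¹ with hr₂
    have hsq₁ : Real.sqrt S₁ ^ 2 = S₁ := Real.sq_sqrt hS₁nn
    have hsq₂ : Real.sqrt S₂ ^ 2 = S₂ := Real.sq_sqrt hS₂nn
    have hr₁pos : 0 < Real.sqrt S₁ := Real.sqrt_pos.2 (lt_of_le_of_ne hS₁nn (Ne.symm h₁))
    have hr₂pos : 0 < Real.sqrt S₂ := Real.sqrt_pos.2 (lt_of_le_of_ne hS₂nn (Ne.symm h₂))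
    have hmem : (‖star ψ ⬝ᵥ prodv (((r₁:ℝ):ℂ) • χ₁) (((r₂:ℝ):ℂ) • χ₂)‖)^2
        ≤ lam := by
      apply hg.2
      exact ⟨_, _, unit_normalize χ₁ h₁, unit_normalize χ₂ h₂, rfl⟩
    rw [prodv_smul, dotProduct_smul, smul_eq_mul, norm_mul, norm_mul] at hmem
    simp only [Complex.norm_real, Real.norm_eq_abs, smul_eq_mul] at hmem
    have habs : |r₁| = r₁ := abs_of_pos (by positivity)
    have habs2 : |r₂| = r₂ := abs_of_pos (by positivity)
    rw [habs, habs2] at hmem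
    have key : (r₁ * r₂ * ‖star ψ ⬝ᵥ prodv χ₁ χ₂‖)^2 ≤ lam := hmem
    have expand : (r₁ * r₂ * ‖star ψ ⬝ᵥ prodv χ₁ χ₂‖)^2
        = (‖star ψ ⬝ᵥ prodv χ₁ χ₂‖)^2 / (S₁ * S₂) := by
      rw [mul_pow, mul_pow, hr₁, hr₂, inv_pow, inv_pow, hsq₁, hsq₂]
      field_simp
    have hS₁pos : 0 < S₁ := lt_of_le_of_ne hS₁nn (Ne.symm h₁)
    have hS₂pos : 0 < S₂ := lt_of_le_of_ne hS₂nn (Ne.symm h₂)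
    rw [expand, div_le_iff₀ (by positivity)] at key
    calc (‖star ψ ⬝ᵥ prodv χ₁ χ₂‖)^2 ≤ lam * (S₁ * S₂) := key
      _ = lam * S₁ * S₂ := by ring

lemma sum_mulVec' {n m : Type*} [Fintype n] {N : ℕ} (A : Fin N → Matrix m n ℂ)
    (v : n → ℂ) : (∑ i, A i).mulVec v = ∑ i, (A i).mulVec v := by
  funext y
  simp [mulVec, dotProduct, Matrix.sum_apply, Finset.sum_mul]
  rw [Finset.sum_comm]

lemma vecMulVec_mulVec' {n m : Type*} [Fintype n] (u : m → ℂ) (v w : n → ℂ) :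
    (vecMulVec u v).mulVec w = (v ⬝ᵥ w) • u := by
  funext y
  simp only [mulVec, vecMulVec_apply, dotProduct, Pi.smul_apply, smul_eq_mul,
    Finset.sum_mul]
  exact Finset.sum_congr rfl (fun z _ => by ring)

lemma dot_sum {n : Type*} [Fintype n] {N : ℕ} (v : n → ℂ) (w : Fin N → n → ℂ) :
    v ⬝ᵥ (∑ i, w i) = ∑ i, v ⬝ᵥ w i := by
  simp only [dotProduct, Finset.sum_apply, Finset.mul_sum]
  rw [Finset.sum_comm]

lemma conj_dot {n : Type*} [Fintype n] (u v : n → ℂ) :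
    star u ⬝ᵥ v = starRingEnd ℂ (star v ⬝ᵥ u) := by
  simp [dotProduct, map_sum, mul_comm]

lemma rayleigh_eq_s6 {n : Type*} [Fintype n] {N : ℕ} (p lam : Fin N → ℝ)
    (ψ : Fin N → n → ℂ) (φ : n → ℂ) :
    (star φ ⬝ᵥ ((∑ i, ((p i * lam i : ℝ) : ℂ) •
        Matrix.vecMulVec (ψ i) (star (ψ i))).mulVec φ)).re
      = ∑ i, p i * lam i * (‖star (ψ i) ⬝ᵥ φ‖)^2 := by
  rw [sum_mulVec']
  have h1 : ∀ i : Fin N, (((p i * lam i : ℝ) : ℂ) •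
      Matrix.vecMulVec (ψ i) (star (ψ i))).mulVec φ
      = ((p i * lam i : ℝ) : ℂ) • ((star (ψ i) ⬝ᵥ φ) • ψ i) := by
    intro i
    rw [smul_mulVec, vecMulVec_mulVec']
  simp only [h1]
  rw [dot_sum]
  simp only [dotProduct_smul, smul_eq_mul]
  have h2 : ∀ i : Fin N, star φ ⬝ᵥ ψ i = starRingEnd ℂ (star (ψ i) ⬝ᵥ φ) :=
    fun i => conj_dot φ (ψ i)
  have h3 : ∀ i : Fin N, ((p i * lam i : ℝ) : ℂ) *
      ((star (ψ i) ⬝ᵥ φ) * (star φ ⬝ᵥ ψ i))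
      = ((p i * lam i * (‖star (ψ i) ⬝ᵥ φ‖)^2 : ℝ) : ℂ) := by
    intro i
    rw [h2 i, Complex.mul_conj, Complex.sq_norm]
    push_cast
    ring
  rw [Finset.sum_congr rfl (fun i _ => h3 i), ← Complex.ofReal_sum]
  exact Complex.ofReal_re _

lemma nsq_prodv {d₁ d₂ : ℕ} (a : Fin d₁ → ℂ) (b : Fin d₂ → ℂ) :
    ∑ y : Fin d₁ × Fin d₂, Complex.normSq (prodv a b y)
      = (∑ j, Complex.normSq (a j)) * (∑ j, Complex.normSq (b j)) := by
  rw [Fintype.sum_prod_type, Finset.sum_mul_sum]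
  simp [prodv, Complex.normSq_mul]

lemma trace_vecMulVec_star {n : Type*} [Fintype n] (u : n → ℂ) :
    Matrix.trace (vecMulVec u (star u)) = ((∑ y, Complex.normSq (u y) : ℝ) : ℂ) := by
  push_cast
  simp [Matrix.trace, Matrix.diag, vecMulVec_apply, Complex.mul_conj]

lemma trace_povm {d₁ d₂ A : ℕ} (m : Fin A → ℝ) (χ₁ : Fin A → Fin d₁ → ℂ)
    (χ₂ : Fin A → Fin d₂ → ℂ)
    (h : ∑ a, (m a : ℂ) • Matrix.vecMulVec (prodv (χ₁ a) (χ₂ a))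
        (star (prodv (χ₁ a) (χ₂ a))) = 1) :
    ∑ a, m a * ((∑ j, Complex.normSq (χ₁ a j)) * (∑ j, Complex.normSq (χ₂ a j)))
      = (d₁ : ℝ) * d₂ := by
  have := congrArg Matrix.trace h
  rw [Matrix.trace_sum, Matrix.trace_one] at this
  simp only [Matrix.trace_smul, trace_vecMulVec_star, nsq_prodv, smul_eq_mul] at this
  have h2 : ((∑ a, m a * ((∑ j, Complex.normSq (χ₁ a j)) *
      (∑ j, Complex.normSq (χ₂ a j))) : ℝ) : ℂ) = (((d₁ : ℝ) * d₂ : ℝ) : ℂ) := by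
    push_cast at this ⊢
    rw [this]
    simp [Fintype.card_prod]
  exact_mod_cast h2

/-- The set of average fidelities achievable by (rank-one) separable measurements
together with guessing strategies, for the ensemble `{(pᵢ, ψᵢ)}`. Its supremum is the
separable fidelity `F_S`. -/
def sepFidSet {d₁ d₂ : ℕ} (N : ℕ) (p : Fin N → ℝ)
    (ψ : Fin N → (Fin d₁ × Fin d₂ → ℂ)) : Set ℝ :=
  {x : ℝ | ∃ (A : ℕ) (m : Fin A → ℝ) (χ₁ : Fin A → Fin d₁ → ℂ)
      (χ₂ : Fin A → Fin d₂ → ℂ) (φ : Fin A → (Fin d₁ × Fin d₂ → ℂ)),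
    (∀ a, 0 < m a) ∧ (∀ a, star (φ a) ⬝ᵥ φ a = 1) ∧
    (∑ a, (m a : ℂ) • Matrix.vecMulVec (prodv (χ₁ a) (χ₂ a))
        (star (prodv (χ₁ a) (χ₂ a))) = 1) ∧
    x = ∑ a, ∑ i, p i * m a *
          (‖star (ψ i) ⬝ᵥ prodv (χ₁ a) (χ₂ a)‖)^2 *
          (‖star (ψ i) ⬝ᵥ φ a‖)^2}

/-- Theorem 3: for an ensemble of bipartite pure states with squared largest Schmidt
coefficients `λᵢ` (characterized as the maximal squared overlap with product unit
vectors), the separable fidelity satisfies `F_S ≤ d₁ d₂ ‖Λ‖_∞` where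
`Λ = ∑ᵢ pᵢ λᵢ |ψᵢ⟩⟨ψᵢ|` and `‖Λ‖_∞` is its largest eigenvalue (maximal Rayleigh
quotient). -/
theorem stmt6 (d₁ d₂ N : ℕ) (hd : d₁ ≤ d₂)
    (ψ : Fin N → (Fin d₁ × Fin d₂ → ℂ)) (hψ : ∀ i, star (ψ i) ⬝ᵥ ψ i = 1)
    (p : Fin N → ℝ) (hp : ∀ i, 0 ≤ p i) (hpsum : ∑ i, p i = 1)
    (lam : Fin N → ℝ)
    (hlam : ∀ i, IsGreatest {x : ℝ | ∃ (a : Fin d₁ → ℂ) (b : Fin d₂ → ℂ),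
        star a ⬝ᵥ a = 1 ∧ star b ⬝ᵥ b = 1 ∧
        x = (‖star (ψ i) ⬝ᵥ prodv a b‖)^2} (lam i))
    (Λnorm : ℝ)
    (hΛ : IsGreatest {x : ℝ | ∃ v : Fin d₁ × Fin d₂ → ℂ, star v ⬝ᵥ v = 1 ∧
        x = (star v ⬝ᵥ ((∑ i, ((p i * lam i : ℝ) : ℂ) •
          Matrix.vecMulVec (ψ i) (star (ψ i))).mulVec v)).re} Λnorm) :
    sSup (sepFidSet N p ψ) ≤ (d₁ : ℝ) * d₂ * Λnorm := by
  have hlam0 : ∀ i, 0 ≤ lam i := by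
    intro i
    obtain ⟨a, b, _, _, hx⟩ := (hlam i).1
    rw [hx]; positivity
  have hΛ0 : 0 ≤ Λnorm := by
    obtain ⟨v, hv, hval⟩ := hΛ.1
    rw [hval, rayleigh_eq_s6]
    exact Finset.sum_nonneg fun i _ => by
      have := hp i; have := hlam0 i; positivity
  apply Real.sSup_le _ (by positivity)
  rintro x ⟨A, m, χ₁, χ₂, φ, hm, hφ, hPOVM, rfl⟩
  have hS₁nn : ∀ a, 0 ≤ ∑ j, Complex.normSq (χ₁ a j) :=
    fun a => Finset.sum_nonneg fun j _ => Complex.normSq_nonneg _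
  have hS₂nn : ∀ a, 0 ≤ ∑ j, Complex.normSq (χ₂ a j) :=
    fun a => Finset.sum_nonneg fun j _ => Complex.normSq_nonneg _
  have step1 : ∀ a : Fin A, ∑ i, p i * m a *
        (‖star (ψ i) ⬝ᵥ prodv (χ₁ a) (χ₂ a)‖)^2 *
        (‖star (ψ i) ⬝ᵥ φ a‖)^2
      ≤ m a * ((∑ j, Complex.normSq (χ₁ a j)) * (∑ j, Complex.normSq (χ₂ a j)))
        * Λnorm := by
    intro a
    have hR : ∑ i, p i * lam i * (‖star (ψ i) ⬝ᵥ φ a‖)^2 ≤ Λnorm :=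
      hΛ.2 ⟨φ a, hφ a, (rayleigh_eq_s6 p lam ψ (φ a)).symm⟩
    calc ∑ i, p i * m a *
          (‖star (ψ i) ⬝ᵥ prodv (χ₁ a) (χ₂ a)‖)^2 *
          (‖star (ψ i) ⬝ᵥ φ a‖)^2
        ≤ ∑ i, m a * ((∑ j, Complex.normSq (χ₁ a j)) * (∑ j, Complex.normSq (χ₂ a j)))
            * (p i * lam i * (‖star (ψ i) ⬝ᵥ φ a‖)^2) := by
          apply Finset.sum_le_sum
          intro i _
          have hov := overlap_bound (ψ i) (lam i) (hlam i) (χ₁ a) (χ₂ a)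
          have h1 : p i * m a * (‖star (ψ i) ⬝ᵥ prodv (χ₁ a) (χ₂ a)‖)^2
                * (‖star (ψ i) ⬝ᵥ φ a‖)^2
              ≤ p i * m a * (lam i * (∑ j, Complex.normSq (χ₁ a j))
                * (∑ j, Complex.normSq (χ₂ a j)))
                * (‖star (ψ i) ⬝ᵥ φ a‖)^2 := by
            apply mul_le_mul_of_nonneg_right _ (by positivity)
            exact mul_le_mul_of_nonneg_left hov
              (mul_nonneg (hp i) (le_of_lt (hm a)))
          calc p i * m a * (‖star (ψ i) ⬝ᵥ prodv (χ₁ a) (χ₂ a)‖)^2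
                * (‖star (ψ i) ⬝ᵥ φ a‖)^2 ≤ _ := h1
            _ = m a * ((∑ j, Complex.normSq (χ₁ a j)) * (∑ j, Complex.normSq (χ₂ a j)))
                * (p i * lam i * (‖star (ψ i) ⬝ᵥ φ a‖)^2) := by ring
      _ = m a * ((∑ j, Complex.normSq (χ₁ a j)) * (∑ j, Complex.normSq (χ₂ a j)))
          * ∑ i, p i * lam i * (‖star (ψ i) ⬝ᵥ φ a‖)^2 :=
          (Finset.mul_sum _ _ _).symm
      _ ≤ m a * ((∑ j, Complex.normSq (χ₁ a j)) * (∑ j, Complex.normSq (χ₂ a j)))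
          * Λnorm := by
          apply mul_le_mul_of_nonneg_left hR
          have := hm a; have := hS₁nn a; have := hS₂nn a; positivity
  calc ∑ a, ∑ i, p i * m a *
        (‖star (ψ i) ⬝ᵥ prodv (χ₁ a) (χ₂ a)‖)^2 *
        (‖star (ψ i) ⬝ᵥ φ a‖)^2
      ≤ ∑ a, m a * ((∑ j, Complex.normSq (χ₁ a j)) * (∑ j, Complex.normSq (χ₂ a j)))
          * Λnorm := Finset.sum_le_sum fun a _ => step1 a
    _ = (∑ a, m a * ((∑ j, Complex.normSq (χ₁ a j)) * (∑ j, Complex.normSq (χ₂ a j))))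
        * Λnorm := by rw [← Finset.sum_mul]
    _ = (d₁ : ℝ) * d₂ * Λnorm := by rw [trace_povm m χ₁ χ₂ hPOVM]
end
end

section
/- For a set of N equally likely mutually orthogonal pure states in ℂ^{d₁} ⊗ ℂ^{d₂}, the separable fidelity satisfies F_S ≤ λ_max · d₁ · d₂ / N, where λ_max is the maximum over the ensemble of the squared largest Schmidt coefficient. -/
open Matrix
open scoped BigOperators ComplexOrder

noncomputable section

/-- Bessel's inequality for vectors orthonormal w.r.t. the dot product. -/
lemma bessel_dot {ι : Type*} [Fintype ι] {N : ℕ}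
    (ψ : Fin N → (ι → ℂ)) (hortho : ∀ i j, star (ψ i) ⬝ᵥ ψ j = if i = j then 1 else 0)
    (φ : ι → ℂ) (hφ : star φ ⬝ᵥ φ = 1) :
    ∑ i, (‖star (ψ i) ⬝ᵥ φ‖)^2 ≤ 1 := by
  let v : Fin N → EuclideanSpace ℂ ι := fun i => WithLp.toLp 2 (ψ i)
  let φ' : EuclideanSpace ℂ ι := WithLp.toLp 2 φ
  let toE : (ι → ℂ) → EuclideanSpace ℂ ι := fun x => WithLp.toLp 2 x
  have hinner : ∀ (x y : ι → ℂ),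
      (inner (𝕜 := ℂ) (toE x) (toE y)) = star x ⬝ᵥ y := by
    intro x y
    simp [toE, PiLp.inner_apply, dotProduct, RCLike.inner_apply, Pi.star_apply, mul_comm]
  have hv : Orthonormal ℂ v := by
    rw [orthonormal_iff_ite]
    intro i j
    rw [show (inner ℂ (v i) (v j) : ℂ) = star (ψ i) ⬝ᵥ ψ j from hinner (ψ i) (ψ j), hortho i j]
  have hb := hv.sum_inner_products_le (x := φ') (s := Finset.univ)
  have hnφ : ‖φ'‖ ^ 2 = 1 := by
    have h2 := inner_self_eq_norm_sq (𝕜 := ℂ) φ'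
    rw [show (inner ℂ φ' φ' : ℂ) = star φ ⬝ᵥ φ from hinner φ φ, hφ] at h2
    simpa using h2.symm
  rw [hnφ] at hb
  calc ∑ i, (‖star (ψ i) ⬝ᵥ φ‖)^2
      = ∑ i, ‖(inner ℂ (v i) φ' : ℂ)‖^2 := by
        refine Finset.sum_congr rfl fun i _ => ?_
        rw [show (inner ℂ (v i) φ' : ℂ) = star (ψ i) ⬝ᵥ φ from hinner (ψ i) φ]
    _ ≤ 1 := hb

lemma dot_self_eq {n : ℕ} (c : Fin n → ℂ) :
    star c ⬝ᵥ c = ((∑ y, ‖c y‖ ^ 2 : ℝ) : ℂ) := by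
  simp only [dotProduct, Pi.star_apply, Complex.star_def]
  rw [Complex.ofReal_sum]
  refine Finset.sum_congr rfl fun y _ => ?_
  rw [Complex.sq_norm, Complex.normSq_eq_conj_mul_self]

lemma scale_bound {d₁ d₂ N : ℕ} (ψ : Fin N → (Fin d₁ × Fin d₂ → ℂ)) (lam : Fin N → ℝ)
    (hlam : ∀ i, IsGreatest {x : ℝ | ∃ (a : Fin d₁ → ℂ) (b : Fin d₂ → ℂ),
        star a ⬝ᵥ a = 1 ∧ star b ⬝ᵥ b = 1 ∧
        x = (‖star (ψ i) ⬝ᵥ prodv a b‖)^2} (lam i))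
    (i : Fin N) (c₁ : Fin d₁ → ℂ) (c₂ : Fin d₂ → ℂ) :
    (‖star (ψ i) ⬝ᵥ prodv c₁ c₂‖)^2 ≤
      lam i * ((∑ y, ‖c₁ y‖^2) * (∑ y, ‖c₂ y‖^2)) := by
  set s₁ : ℝ := ∑ y, ‖c₁ y‖^2 with hs₁
  set s₂ : ℝ := ∑ y, ‖c₂ y‖^2 with hs₂
  have hs₁0 : 0 ≤ s₁ := Finset.sum_nonneg fun y _ => sq_nonneg _
  have hs₂0 : 0 ≤ s₂ := Finset.sum_nonneg fun y _ => sq_nonneg _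
  have hlam0 : 0 ≤ lam i := by
    obtain ⟨a, b, -, -, hx⟩ := (hlam i).1
    rw [hx]; positivity
  rcases eq_or_lt_of_le hs₁0 with h1 | h1
  · have hc : c₁ = 0 := by
      funext y
      have := (Finset.sum_eq_zero_iff_of_nonneg (fun y _ => sq_nonneg (‖c₁ y‖))).1
        h1.symm y (Finset.mem_univ y)
      simpa [pow_eq_zero_iff] using this
    have : prodv c₁ c₂ = 0 := by funext y; simp [prodv, hc]
    rw [this]
    simp [dotProduct]
    positivity
  rcases eq_or_lt_of_le hs₂0 with h2 | h2
  · have hc : c₂ = 0 := by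
      funext y
      have := (Finset.sum_eq_zero_iff_of_nonneg (fun y _ => sq_nonneg (‖c₂ y‖))).1
        h2.symm y (Finset.mem_univ y)
      simpa [pow_eq_zero_iff] using this
    have : prodv c₁ c₂ = 0 := by funext y; simp [prodv, hc]
    rw [this]
    simp [dotProduct]
    positivity
  set r₁ : ℝ := Real.sqrt s₁ with hr₁
  set r₂ : ℝ := Real.sqrt s₂ with hr₂
  have hr₁0 : 0 < r₁ := Real.sqrt_pos.2 h1
  have hr₂0 : 0 < r₂ := Real.sqrt_pos.2 h2
  set a : Fin d₁ → ℂ := fun y => (r₁ : ℂ)⁻¹ * c₁ y with ha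
  set b : Fin d₂ → ℂ := fun y => (r₂ : ℂ)⁻¹ * c₂ y with hb
  have hna : star a ⬝ᵥ a = 1 := by
    rw [dot_self_eq]
    have : ∑ y, ‖a y‖ ^ 2 = r₁⁻¹ ^ 2 * s₁ := by
      rw [hs₁, Finset.mul_sum]
      refine Finset.sum_congr rfl fun y _ => ?_
      simp [ha, _root_.map_mul, mul_pow, abs_of_pos hr₁0]
    rw [this, inv_pow, hr₁, Real.sq_sqrt h1.le, inv_mul_cancel₀ (ne_of_gt h1)]
    norm_num
  have hnb : star b ⬝ᵥ b = 1 := by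
    rw [dot_self_eq]
    have : ∑ y, ‖b y‖ ^ 2 = r₂⁻¹ ^ 2 * s₂ := by
      rw [hs₂, Finset.mul_sum]
      refine Finset.sum_congr rfl fun y _ => ?_
      simp [hb, _root_.map_mul, mul_pow, abs_of_pos hr₂0]
    rw [this, inv_pow, hr₂, Real.sq_sqrt h2.le, inv_mul_cancel₀ (ne_of_gt h2)]
    norm_num
  have hmem : (‖star (ψ i) ⬝ᵥ prodv a b‖)^2 ≤ lam i :=
    (hlam i).2 ⟨a, b, hna, hnb, rfl⟩
  have hprod : prodv a b = fun y => ((r₁:ℂ)⁻¹ * (r₂:ℂ)⁻¹) * prodv c₁ c₂ y := by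
    funext y; simp [prodv, ha, hb]; ring
  rw [hprod] at hmem
  have hdot : star (ψ i) ⬝ᵥ (fun y => ((r₁:ℂ)⁻¹ * (r₂:ℂ)⁻¹) * prodv c₁ c₂ y)
      = ((r₁:ℂ)⁻¹ * (r₂:ℂ)⁻¹) * (star (ψ i) ⬝ᵥ prodv c₁ c₂) := by
    simp [dotProduct, Finset.mul_sum]
    exact Finset.sum_congr rfl fun y _ => by ring
  rw [hdot, norm_mul] at hmem
  have habs : ‖(r₁:ℂ)⁻¹ * (r₂:ℂ)⁻¹‖ = r₁⁻¹ * r₂⁻¹ := by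
    simp [abs_of_pos hr₁0, abs_of_pos hr₂0]
  rw [habs] at hmem
  set X : ℝ := ‖star (ψ i) ⬝ᵥ prodv c₁ c₂‖ with hX
  have hss : s₁ * s₂ = (r₁ * r₂)^2 := by
    rw [hr₁, hr₂, mul_pow, Real.sq_sqrt h1.le, Real.sq_sqrt h2.le]
  rw [hss]
  have h5 : r₁⁻¹ * r₂⁻¹ * (r₁ * r₂) = 1 := by field_simp
  have h4 : X^2 = (r₁⁻¹ * r₂⁻¹ * X)^2 * (r₁ * r₂)^2 := by
    calc X^2 = (r₁⁻¹ * r₂⁻¹ * (r₁ * r₂))^2 * X^2 := by rw [h5]; ring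
      _ = (r₁⁻¹ * r₂⁻¹ * X)^2 * (r₁ * r₂)^2 := by ring
  rw [h4]
  exact mul_le_mul_of_nonneg_right hmem (sq_nonneg _)

lemma trace_lemma {ι : Type*} [Fintype ι] [DecidableEq ι] {A : ℕ}
    (m : Fin A → ℝ) (u : Fin A → ι → ℂ)
    (hcomp : ∑ a, (m a : ℂ) • Matrix.vecMulVec (u a) (star (u a)) = 1) :
    ∑ a, m a * (∑ y, ‖u a y‖^2) = Fintype.card ι := by
  have hdiag : ∀ y : ι, ∑ a, m a * ‖u a y‖^2 = 1 := by
    intro y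
    have h := congrFun (congrFun hcomp y) y
    simp only [Matrix.sum_apply, Matrix.smul_apply, Matrix.vecMulVec_apply, Pi.star_apply,
      Matrix.one_apply_eq, smul_eq_mul] at h
    have h2 : ∑ a, ((m a * ‖u a y‖^2 : ℝ) : ℂ) = 1 := by
      rw [← h]
      refine Finset.sum_congr rfl fun a _ => ?_
      rw [Complex.star_def, Complex.mul_conj, ← Complex.sq_norm]
      push_cast
      ring
    rw [← Complex.ofReal_sum] at h2
    exact_mod_cast h2
  have h3 : ∑ y : ι, ∑ a, m a * ‖u a y‖^2 = Fintype.card ι := by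
    simp [hdiag]
  rw [Finset.sum_comm] at h3
  rw [← h3]
  exact Finset.sum_congr rfl fun a _ => Finset.mul_sum _ _ _

/-- Corollary 2: for `N` equally likely mutually orthogonal pure states in
`ℂ^{d₁} ⊗ ℂ^{d₂}`, the separable fidelity satisfies `F_S ≤ λ_max d₁ d₂ / N`, where
`λ_max` is the largest of the squared largest Schmidt coefficients. -/
theorem stmt7 (d₁ d₂ N : ℕ) (hd : d₁ ≤ d₂) (hN : 0 < N)
    (ψ : Fin N → (Fin d₁ × Fin d₂ → ℂ))
    (hortho : ∀ i j, star (ψ i) ⬝ᵥ ψ j = if i = j then 1 else 0)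
    (lam : Fin N → ℝ)
    (hlam : ∀ i, IsGreatest {x : ℝ | ∃ (a : Fin d₁ → ℂ) (b : Fin d₂ → ℂ),
        star a ⬝ᵥ a = 1 ∧ star b ⬝ᵥ b = 1 ∧
        x = (‖star (ψ i) ⬝ᵥ prodv a b‖)^2} (lam i)) :
    sSup (sepFidSet N (fun _ => (N : ℝ)⁻¹) ψ) ≤
      (Finset.univ.sup' (Finset.univ_nonempty_iff.mpr ⟨⟨0, hN⟩⟩) lam) * d₁ * d₂ / N := by
  set L : ℝ := Finset.univ.sup' (Finset.univ_nonempty_iff.mpr ⟨⟨0, hN⟩⟩) lam with hLdef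
  have hLi : ∀ i, lam i ≤ L := fun i => Finset.le_sup' lam (Finset.mem_univ i)
  have hL0 : 0 ≤ L := by
    obtain ⟨a, b, -, -, hx⟩ := (hlam ⟨0, hN⟩).1
    refine le_trans ?_ (hLi ⟨0, hN⟩)
    rw [hx]; positivity
  have hbound : 0 ≤ L * d₁ * d₂ / N := by positivity
  apply Real.sSup_le _ hbound
  rintro x ⟨A, m, χ₁, χ₂, φ, hm, hφn, hcomp, rfl⟩
  -- abbreviations
  have hK0 : ∀ a : Fin A, (0:ℝ) ≤ ∑ y : Fin d₁ × Fin d₂,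
      ‖prodv (χ₁ a) (χ₂ a) y‖^2 :=
    fun a => Finset.sum_nonneg fun y _ => sq_nonneg _
  have hK : ∀ a : Fin A, (∑ y : Fin d₁ × Fin d₂, ‖prodv (χ₁ a) (χ₂ a) y‖^2)
      = (∑ y, ‖χ₁ a y‖^2) * (∑ y, ‖χ₂ a y‖^2) := by
    intro a
    rw [Fintype.sum_prod_type, Finset.sum_mul_sum]
    refine Finset.sum_congr rfl fun y₁ _ => Finset.sum_congr rfl fun y₂ _ => ?_
    simp [prodv, _root_.map_mul, mul_pow]
  have htr : ∑ a, m a * (∑ y : Fin d₁ × Fin d₂, ‖prodv (χ₁ a) (χ₂ a) y‖^2)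
      = (d₁ * d₂ : ℕ) := by
    have := trace_lemma m (fun a => prodv (χ₁ a) (χ₂ a)) hcomp
    simpa using this
  have hAb : ∀ (a : Fin A) (i : Fin N),
      (‖star (ψ i) ⬝ᵥ prodv (χ₁ a) (χ₂ a)‖)^2 ≤
        L * (∑ y : Fin d₁ × Fin d₂, ‖prodv (χ₁ a) (χ₂ a) y‖^2) := by
    intro a i
    refine le_trans (scale_bound ψ lam hlam i (χ₁ a) (χ₂ a)) ?_
    rw [← hK a]
    exact mul_le_mul_of_nonneg_right (hLi i) (hK0 a)
  have hB : ∀ a : Fin A, ∑ i, (‖star (ψ i) ⬝ᵥ φ a‖)^2 ≤ 1 :=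
    fun a => bessel_dot ψ hortho (φ a) (hφn a)
  calc ∑ a, ∑ i, (N:ℝ)⁻¹ * m a *
          (‖star (ψ i) ⬝ᵥ prodv (χ₁ a) (χ₂ a)‖)^2 *
          (‖star (ψ i) ⬝ᵥ φ a‖)^2
      ≤ ∑ a, (N:ℝ)⁻¹ * L * (m a * (∑ y : Fin d₁ × Fin d₂,
          ‖prodv (χ₁ a) (χ₂ a) y‖^2)) := by
        refine Finset.sum_le_sum fun a _ => ?_
        calc ∑ i, (N:ℝ)⁻¹ * m a *
                (‖star (ψ i) ⬝ᵥ prodv (χ₁ a) (χ₂ a)‖)^2 *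
                (‖star (ψ i) ⬝ᵥ φ a‖)^2
            ≤ ∑ i, ((N:ℝ)⁻¹ * m a * (L * (∑ y : Fin d₁ × Fin d₂,
                ‖prodv (χ₁ a) (χ₂ a) y‖^2))) *
                (‖star (ψ i) ⬝ᵥ φ a‖)^2 := by
              refine Finset.sum_le_sum fun i _ => ?_
              refine mul_le_mul_of_nonneg_right ?_ (sq_nonneg _)
              refine mul_le_mul_of_nonneg_left (hAb a i) ?_
              have := (hm a).le
              positivity
          _ = ((N:ℝ)⁻¹ * m a * (L * (∑ y : Fin d₁ × Fin d₂,
                ‖prodv (χ₁ a) (χ₂ a) y‖^2))) *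
                ∑ i, (‖star (ψ i) ⬝ᵥ φ a‖)^2 :=
              (Finset.mul_sum _ _ _).symm
          _ ≤ ((N:ℝ)⁻¹ * m a * (L * (∑ y : Fin d₁ × Fin d₂,
                ‖prodv (χ₁ a) (χ₂ a) y‖^2))) * 1 := by
              refine mul_le_mul_of_nonneg_left (hB a) ?_
              have h1 := (hm a).le
              have h2 := hK0 a
              positivity
          _ = (N:ℝ)⁻¹ * L * (m a * (∑ y : Fin d₁ × Fin d₂,
                ‖prodv (χ₁ a) (χ₂ a) y‖^2)) := by ring
    _ = (N:ℝ)⁻¹ * L * ((d₁ * d₂ : ℕ) : ℝ) := by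
        rw [← Finset.mul_sum, htr]
    _ = L * d₁ * d₂ / N := by
        push_cast
        field_simp
end
end

section
/- A set of N equally likely mutually orthogonal maximally entangled states in ℂ^{d₁} ⊗ ℂ^{d₂} (d₁ ≤ d₂, Schmidt rank d₁) cannot be perfectly distinguished by separable measurements whenever N > d₂; i.e., the separable success probability satisfies P_s(S) ≤ d₂/N < 1. -/
open Matrix
open scoped BigOperators ComplexOrder

noncomputable section

/-- The set of success probabilities achievable by (rank-one) separable measurements
together with decoding functions; its supremum is the separable success probability
`P_s(S)`. -/
def sepPsSet {d₁ d₂ : ℕ} (N : ℕ) (p : Fin N → ℝ)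
    (ψ : Fin N → (Fin d₁ × Fin d₂ → ℂ)) : Set ℝ :=
  {x : ℝ | ∃ (A : ℕ) (m : Fin A → ℝ) (χ₁ : Fin A → Fin d₁ → ℂ)
      (χ₂ : Fin A → Fin d₂ → ℂ) (G : Fin A → Fin N),
    (∀ a, 0 < m a) ∧
    (∑ a, (m a : ℂ) • Matrix.vecMulVec (prodv (χ₁ a) (χ₂ a))
        (star (prodv (χ₁ a) (χ₂ a))) = 1) ∧
    x = ∑ a, p (G a) * m a *
          ‖star (ψ (G a)) ⬝ᵥ prodv (χ₁ a) (χ₂ a)‖^2}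

/-- `d₁ ⬝ ‖conj(M) b‖² ≤ ‖b‖²` when the reduced state is maximally mixed. -/
lemma sumC_le {d₁ d₂ : ℕ} (hd₁ : 0 < d₁) (ψ : Fin d₁ × Fin d₂ → ℂ)
    (hmax : red₁ ψ = ((d₁ : ℂ))⁻¹ • 1) (b : Fin d₂ → ℂ) :
    (d₁ : ℝ) * ∑ i, Complex.normSq (∑ j, (starRingEnd ℂ) (ψ (i, j)) * b j)
      ≤ ∑ j, Complex.normSq (b j) := by
  classical
  have hd₁c : ((d₁ : ℂ)) ≠ 0 := by exact_mod_cast Nat.cast_ne_zero.mpr hd₁.ne'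
  set M : Matrix (Fin d₁) (Fin d₂) ℂ := Matrix.of fun i j => ψ (i, j) with hM
  set A : Matrix (Fin d₁) (Fin d₂) ℂ := Mᴴᵀ with hA
  have hMM : M * Mᴴ = ((d₁ : ℂ))⁻¹ • 1 := by
    ext i i'
    have := congrFun (congrFun hmax i) i'
    simpa [Matrix.mul_apply, red₁, hM, Matrix.conjTranspose_apply] using this
  have hAH : Aᴴ = Mᵀ := by
    ext i j
    simp [hA, Matrix.conjTranspose_apply, Matrix.transpose_apply]
  have hAA : A * Aᴴ = ((d₁ : ℂ))⁻¹ • 1 := by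
    rw [hAH, hA, ← Matrix.transpose_mul, hMM]
    simp [Matrix.transpose_smul]
  set P : Matrix (Fin d₂) (Fin d₂) ℂ := 1 - (d₁ : ℂ) • (Aᴴ * A) with hP
  have hPH : Pᴴ = P := by
    simp [hP, Matrix.conjTranspose_smul, Matrix.conjTranspose_mul]
  have hQQ : Aᴴ * A * (Aᴴ * A) = (d₁ : ℂ)⁻¹ • (Aᴴ * A) := by
    calc Aᴴ * A * (Aᴴ * A) = Aᴴ * (A * Aᴴ) * A := by
          rw [Matrix.mul_assoc, Matrix.mul_assoc, Matrix.mul_assoc]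
      _ = (d₁ : ℂ)⁻¹ • (Aᴴ * A) := by
          rw [hAA]
          simp [Matrix.mul_smul, Matrix.smul_mul, Matrix.mul_assoc]
  have hPP : P * P = P := by
    rw [hP, Matrix.sub_mul, Matrix.mul_sub, Matrix.mul_sub]
    simp only [Matrix.one_mul, Matrix.mul_one, Matrix.smul_mul, Matrix.mul_smul, hQQ,
      smul_smul]
    rw [mul_inv_cancel₀ hd₁c]
    module
  have hpsd : P.PosSemidef := by
    have hPd : P = Pᴴ * P := by rw [hPH, hPP]
    rw [hPd]
    exact Matrix.posSemidef_conjTranspose_mul_self P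
  have h0 : 0 ≤ star b ⬝ᵥ (P *ᵥ b) := hpsd.dotProduct_mulVec_nonneg b
  set c : Fin d₁ → ℂ := A *ᵥ b with hc
  have hdot : star b ⬝ᵥ ((Aᴴ * A) *ᵥ b) = star c ⬝ᵥ c := by
    rw [← Matrix.mulVec_mulVec, Matrix.dotProduct_mulVec, ← Matrix.star_mulVec, hc]
  have hexp : star b ⬝ᵥ (P *ᵥ b) = star b ⬝ᵥ b - (d₁ : ℂ) * (star c ⬝ᵥ c) := by
    rw [hP, Matrix.sub_mulVec, Matrix.one_mulVec, Matrix.smul_mulVec,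
      dotProduct_sub, dotProduct_smul, hdot, smul_eq_mul]
  have hstar : ∀ {n : ℕ} (v : Fin n → ℂ),
      star v ⬝ᵥ v = ((∑ i, Complex.normSq (v i) : ℝ) : ℂ) := by
    intro n v
    simp only [dotProduct, Pi.star_apply, Complex.star_def]
    push_cast
    exact Finset.sum_congr rfl fun i _ => by rw [mul_comm, Complex.mul_conj]
  have hci : ∀ i, c i = ∑ j, (starRingEnd ℂ) (ψ (i, j)) * b j := by
    intro i
    simp [hc, Matrix.mulVec, dotProduct, hA, hM, Matrix.conjTranspose_apply]
  rw [hexp, hstar b, hstar c] at h0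
  have h0' : ((d₁ : ℝ) * ∑ i, Complex.normSq (c i) : ℝ) ≤
      ((∑ j, Complex.normSq (b j) : ℝ)) := by
    have : ((0 : ℂ)) ≤ (((∑ j, Complex.normSq (b j)) - (d₁ : ℝ) * ∑ i, Complex.normSq (c i) : ℝ) : ℂ) := by
      convert h0 using 1
      push_cast
      ring
    rw [Complex.zero_le_real] at this
    linarith
  calc (d₁ : ℝ) * ∑ i, Complex.normSq (∑ j, (starRingEnd ℂ) (ψ (i, j)) * b j)
      = (d₁ : ℝ) * ∑ i, Complex.normSq (c i) := rfl
    _ ≤ _ := h0'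

/-- Cauchy–Schwarz for complex sums. -/
lemma cs_sum {n : ℕ} (a c : Fin n → ℂ) :
    ‖∑ i, a i * c i‖ ^ 2 ≤
      (∑ i, Complex.normSq (a i)) * (∑ i, Complex.normSq (c i)) := by
  have h1 : ‖∑ i, a i * c i‖ ≤
      ∑ i, ‖a i‖ * ‖c i‖ := by
    calc ‖∑ i, a i * c i‖ ≤ ∑ i, ‖a i * c i‖ :=
          norm_sum_le _ _
      _ = ∑ i, ‖a i‖ * ‖c i‖ := by
          simp [norm_mul]
  have h2 := Finset.sum_mul_sq_le_sq_mul_sq Finset.univ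
    (fun i => ‖a i‖) (fun i => ‖c i‖)
  have h3 : ‖∑ i, a i * c i‖ ^ 2 ≤
      (∑ i, ‖a i‖ * ‖c i‖) ^ 2 := by
    apply pow_le_pow_left₀ (norm_nonneg _) h1
  calc ‖∑ i, a i * c i‖ ^ 2
      ≤ (∑ i, ‖a i‖ * ‖c i‖) ^ 2 := h3
    _ ≤ (∑ i, ‖a i‖ ^ 2) * (∑ i, ‖c i‖ ^ 2) := h2
    _ = (∑ i, Complex.normSq (a i)) * (∑ i, Complex.normSq (c i)) := by
        simp [Complex.sq_norm]

/-- Overlap bound for a maximally entangled state with a product vector. -/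
lemma term_bound {d₁ d₂ : ℕ} (hd₁ : 0 < d₁) (ψ : Fin d₁ × Fin d₂ → ℂ)
    (hmax : red₁ ψ = ((d₁ : ℂ))⁻¹ • 1) (a : Fin d₁ → ℂ) (b : Fin d₂ → ℂ) :
    ‖star ψ ⬝ᵥ prodv a b‖ ^ 2 ≤
      (d₁ : ℝ)⁻¹ * ((∑ i, Complex.normSq (a i)) * (∑ j, Complex.normSq (b j))) := by
  have hd : (0 : ℝ) < d₁ := by exact_mod_cast hd₁
  set c : Fin d₁ → ℂ := fun i => ∑ j, (starRingEnd ℂ) (ψ (i, j)) * b j with hc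
  have h1 : star ψ ⬝ᵥ prodv a b = ∑ i, a i * c i := by
    simp only [dotProduct, prodv, Pi.star_apply, Complex.star_def, hc,
      Fintype.sum_prod_type, Finset.mul_sum]
    exact Finset.sum_congr rfl fun i _ => Finset.sum_congr rfl fun j _ => by ring
  rw [h1]
  have h2 := cs_sum a c
  have h3 := sumC_le hd₁ ψ hmax b
  have h4 : ∑ i, Complex.normSq (c i) ≤ (d₁ : ℝ)⁻¹ * ∑ j, Complex.normSq (b j) := by
    rw [le_inv_mul_iff₀ hd]
    exact h3
  have h5 : (0 : ℝ) ≤ ∑ i, Complex.normSq (a i) :=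
    Finset.sum_nonneg fun i _ => Complex.normSq_nonneg _
  calc ‖∑ i, a i * c i‖ ^ 2
      ≤ (∑ i, Complex.normSq (a i)) * (∑ i, Complex.normSq (c i)) := h2
    _ ≤ (∑ i, Complex.normSq (a i)) * ((d₁ : ℝ)⁻¹ * ∑ j, Complex.normSq (b j)) :=
        mul_le_mul_of_nonneg_left h4 h5
    _ = (d₁ : ℝ)⁻¹ * ((∑ i, Complex.normSq (a i)) * (∑ j, Complex.normSq (b j))) := by
        ring

/-- A set of `N > d₂` equally likely mutually orthogonal maximally entangled states in
`ℂ^{d₁} ⊗ ℂ^{d₂}` (`d₁ ≤ d₂`) cannot be perfectly distinguished by separable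
measurements: every separable success probability is at most `d₂/N < 1`. -/
theorem stmt9 (d₁ d₂ N : ℕ) (hd₁ : 0 < d₁) (hd : d₁ ≤ d₂) (hN : d₂ < N)
    (ψ : Fin N → (Fin d₁ × Fin d₂ → ℂ))
    (hortho : ∀ i j, star (ψ i) ⬝ᵥ ψ j = if i = j then 1 else 0)
    (hmax : ∀ i, red₁ (ψ i) = ((d₁ : ℂ))⁻¹ • 1) :
    (∀ x ∈ sepPsSet N (fun _ => (N : ℝ)⁻¹) ψ, x ≤ (d₂ : ℝ) / N) ∧
    (d₂ : ℝ) / N < 1 := by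
  have hNpos : (0 : ℝ) < N := by
    exact_mod_cast lt_of_le_of_lt (Nat.zero_le _) hN
  have hdpos : (0 : ℝ) < d₁ := by exact_mod_cast hd₁
  constructor
  · rintro x ⟨A, m, χ₁, χ₂, G, hm, hPOVM, rfl⟩
    -- trace identity
    have htr := congrArg Matrix.trace hPOVM
    rw [Matrix.trace_sum, Matrix.trace_one] at htr
    have htr' : ∀ a : Fin A, Matrix.trace ((m a : ℂ) • Matrix.vecMulVec (prodv (χ₁ a) (χ₂ a))
        (star (prodv (χ₁ a) (χ₂ a)))) =
        ((m a * ((∑ i, Complex.normSq (χ₁ a i)) * (∑ j, Complex.normSq (χ₂ a j))) : ℝ) : ℂ) := by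
      intro a
      rw [Matrix.trace_smul]
      have : Matrix.trace (Matrix.vecMulVec (prodv (χ₁ a) (χ₂ a))
          (star (prodv (χ₁ a) (χ₂ a)))) =
          (((∑ i, Complex.normSq (χ₁ a i)) * (∑ j, Complex.normSq (χ₂ a j)) : ℝ) : ℂ) := by
        simp only [Matrix.trace, Matrix.diag, Matrix.vecMulVec_apply, Pi.star_apply,
          Complex.star_def, Complex.mul_conj]
        rw [show ∑ y : Fin d₁ × Fin d₂, ((Complex.normSq (prodv (χ₁ a) (χ₂ a) y) : ℂ))
            = (((∑ y : Fin d₁ × Fin d₂, Complex.normSq (prodv (χ₁ a) (χ₂ a) y) : ℝ)) : ℂ) by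
          push_cast; rfl]
        congr 1
        rw [Fintype.sum_prod_type]
        calc ∑ i, ∑ j, Complex.normSq (prodv (χ₁ a) (χ₂ a) (i, j))
            = ∑ i, ∑ j, Complex.normSq (χ₁ a i) * Complex.normSq (χ₂ a j) :=
              Finset.sum_congr rfl fun i _ => Finset.sum_congr rfl fun j _ => by
                simp [prodv, Complex.normSq_mul]
          _ = (∑ i, Complex.normSq (χ₁ a i)) * (∑ j, Complex.normSq (χ₂ a j)) :=
              (Finset.sum_mul_sum _ _ _ _).symm
      rw [this, smul_eq_mul]
      push_cast
      ring
    have hsum : ∑ a, Matrix.trace ((m a : ℂ) • Matrix.vecMulVec (prodv (χ₁ a) (χ₂ a))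
        (star (prodv (χ₁ a) (χ₂ a)))) =
        ((∑ a, m a * ((∑ i, Complex.normSq (χ₁ a i)) * (∑ j, Complex.normSq (χ₂ a j))) : ℝ) : ℂ) := by
      rw [Finset.sum_congr rfl fun a _ => htr' a]
      push_cast
      rfl
    rw [hsum] at htr
    have htrR : ∑ a, m a * ((∑ i, Complex.normSq (χ₁ a i)) * (∑ j, Complex.normSq (χ₂ a j)))
        = (d₁ : ℝ) * d₂ := by
      have := htr
      rw [show ((Fintype.card (Fin d₁ × Fin d₂) : ℂ)) = (((d₁ : ℝ) * d₂ : ℝ) : ℂ) by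
        simp] at this
      exact_mod_cast this
    -- term-wise bound and summation
    have hterm : ∀ a : Fin A, (N : ℝ)⁻¹ * m a *
        ‖star (ψ (G a)) ⬝ᵥ prodv (χ₁ a) (χ₂ a)‖ ^ 2 ≤
        (N : ℝ)⁻¹ * ((d₁ : ℝ)⁻¹ *
          (m a * ((∑ i, Complex.normSq (χ₁ a i)) * (∑ j, Complex.normSq (χ₂ a j))))) := by
      intro a
      have hb := term_bound hd₁ (ψ (G a)) (hmax (G a)) (χ₁ a) (χ₂ a)
      have hma : (0 : ℝ) ≤ (N : ℝ)⁻¹ * m a :=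
        mul_nonneg (inv_nonneg.mpr hNpos.le) (hm a).le
      calc (N : ℝ)⁻¹ * m a * ‖star (ψ (G a)) ⬝ᵥ prodv (χ₁ a) (χ₂ a)‖ ^ 2
          ≤ (N : ℝ)⁻¹ * m a * ((d₁ : ℝ)⁻¹ *
            ((∑ i, Complex.normSq (χ₁ a i)) * (∑ j, Complex.normSq (χ₂ a j)))) :=
            mul_le_mul_of_nonneg_left hb hma
        _ = (N : ℝ)⁻¹ * ((d₁ : ℝ)⁻¹ *
            (m a * ((∑ i, Complex.normSq (χ₁ a i)) * (∑ j, Complex.normSq (χ₂ a j))))) := by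
            ring
    calc ∑ a, (N : ℝ)⁻¹ * m a *
          ‖star (ψ (G a)) ⬝ᵥ prodv (χ₁ a) (χ₂ a)‖ ^ 2
        ≤ ∑ a, (N : ℝ)⁻¹ * ((d₁ : ℝ)⁻¹ *
            (m a * ((∑ i, Complex.normSq (χ₁ a i)) * (∑ j, Complex.normSq (χ₂ a j))))) :=
          Finset.sum_le_sum fun a _ => hterm a
      _ = (N : ℝ)⁻¹ * ((d₁ : ℝ)⁻¹ *
            ∑ a, m a * ((∑ i, Complex.normSq (χ₁ a i)) * (∑ j, Complex.normSq (χ₂ a j)))) := by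
          rw [← Finset.mul_sum, ← Finset.mul_sum]
      _ = (d₂ : ℝ) / N := by
          rw [htrR]
          field_simp
  · rw [div_lt_one hNpos]
    exact_mod_cast hN
end
end

section
/- Let S = {(p_i, |ψ_i⟩)}_{i=1}^N be states in ℂ^{d₁}⊗ℂ^{d₂} with squared largest Schmidt coefficients λ_i, ordered so that p₁λ₁ ≥ ... ≥ p_Nλ_N. Let r be the positive integer with κ := Σ_{i=1}^{r-1} λ_i^{-1} ≤ d₁d₂ < Σ_{i=1}^{r} λ_i^{-1}. Then for any separable measurement M, the success probability satisfies P_s(M) ≤ Σ_{i=1}^{r-1} p_i + p_r λ_r (d₁d₂ − κ). -/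
open Matrix
open scoped BigOperators ComplexOrder

noncomputable section

lemma quad_sum {ι κ : Type*} [Fintype ι] [Fintype κ] (v : ι → ℂ) (M : κ → Matrix ι ι ℂ) :
    star v ⬝ᵥ (∑ a, M a) *ᵥ v = ∑ a, star v ⬝ᵥ (M a) *ᵥ v := by
  simp only [dotProduct, mulVec, Matrix.sum_apply, Finset.mul_sum, Finset.sum_mul]
  exact (Finset.sum_congr rfl fun x _ => Finset.sum_comm ..).trans (Finset.sum_comm ..)

lemma quad_smul {ι : Type*} [Fintype ι] (v : ι → ℂ) (c : ℂ) (M : Matrix ι ι ℂ) :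
    star v ⬝ᵥ (c • M) *ᵥ v = c * (star v ⬝ᵥ M *ᵥ v) := by
  rw [smul_mulVec, dotProduct_smul, smul_eq_mul]

lemma quad_rank1 {ι : Type*} [Fintype ι] (v u : ι → ℂ) :
    star v ⬝ᵥ (vecMulVec u (star u)) *ᵥ v = (Complex.normSq (star v ⬝ᵥ u) : ℂ) := by
  have : star v ⬝ᵥ (vecMulVec u (star u)) *ᵥ v
      = (star v ⬝ᵥ u) * (starRingEnd ℂ) (star v ⬝ᵥ u) := by
    simp only [dotProduct, mulVec, vecMulVec, Matrix.of_apply, map_sum]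
    rw [Finset.sum_mul_sum]
    apply Finset.sum_congr rfl; intro i _
    rw [Finset.mul_sum]
    apply Finset.sum_congr rfl; intro j _
    simp only [_root_.map_mul, Pi.star_apply, RCLike.star_def, Complex.conj_conj]
    ring
  rw [this, Complex.mul_conj]

lemma trace_rank1 {ι : Type*} [Fintype ι] (u : ι → ℂ) :
    Matrix.trace (vecMulVec u (star u)) = ((∑ i, Complex.normSq (u i) : ℝ) : ℂ) := by
  simp [Matrix.trace, Matrix.diag, vecMulVec, Complex.mul_conj, RCLike.star_def]

/-- Theorem 4: for states `ψ₀, …, ψ_{N-1}` in `ℂ^{d₁} ⊗ ℂ^{d₂}` with squared largest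
Schmidt coefficients `λᵢ`, ordered so that `pᵢλᵢ` is nonincreasing, and `r` the index
with `κ := ∑_{i<r} λᵢ⁻¹ ≤ d₁d₂ < κ + λ_r⁻¹`, every rank-one separable measurement has
success probability at most `∑_{i<r} pᵢ + p_r λ_r (d₁d₂ − κ)`.
(Here `r` is zero-based, corresponding to the paper's `r-1`.) -/
theorem stmt10 (d₁ d₂ N : ℕ) (hd : d₁ ≤ d₂)
    (ψ : Fin N → (Fin d₁ × Fin d₂ → ℂ)) (hψ : ∀ i, star (ψ i) ⬝ᵥ ψ i = 1)
    (p : Fin N → ℝ) (hp : ∀ i, 0 ≤ p i) (hpsum : ∑ i, p i = 1)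
    (lam : Fin N → ℝ) (hlampos : ∀ i, 0 < lam i)
    (hlam : ∀ i, IsGreatest {x : ℝ | ∃ (a : Fin d₁ → ℂ) (b : Fin d₂ → ℂ),
        star a ⬝ᵥ a = 1 ∧ star b ⬝ᵥ b = 1 ∧
        x = ‖star (ψ i) ⬝ᵥ prodv a b‖^2} (lam i))
    (hord : ∀ i j : Fin N, i ≤ j → p j * lam j ≤ p i * lam i)
    (r : Fin N)
    (hκ : ∑ i ∈ Finset.univ.filter (fun i => i < r), (lam i)⁻¹ ≤ (d₁ : ℝ) * d₂)
    (hκ' : (d₁ : ℝ) * d₂ <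
        (∑ i ∈ Finset.univ.filter (fun i => i < r), (lam i)⁻¹) + (lam r)⁻¹)
    (A : ℕ) (m : Fin A → ℝ) (χ₁ : Fin A → Fin d₁ → ℂ) (χ₂ : Fin A → Fin d₂ → ℂ)
    (hm : ∀ a, 0 < m a)
    (hpovm : ∑ a, (m a : ℂ) • Matrix.vecMulVec (prodv (χ₁ a) (χ₂ a))
        (star (prodv (χ₁ a) (χ₂ a))) = 1) :
    ∑ a, m a * (Finset.univ.sup' (Finset.univ_nonempty_iff.mpr ⟨r⟩)
        fun i => p i * ‖star (ψ i) ⬝ᵥ prodv (χ₁ a) (χ₂ a)‖^2) ≤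
      (∑ i ∈ Finset.univ.filter (fun i => i < r), p i) +
        p r * lam r * ((d₁ : ℝ) * d₂ -
          ∑ i ∈ Finset.univ.filter (fun i => i < r), (lam i)⁻¹) := by
  classical
  set u : Fin A → Fin d₁ × Fin d₂ → ℂ := fun a => prodv (χ₁ a) (χ₂ a) with hu
  set c : Fin A → Fin N → ℝ :=
    fun a i => ‖star (ψ i) ⬝ᵥ u a‖^2 with hcdef
  set n : Fin A → ℝ := fun a => ∑ y, Complex.normSq (u a y) with hndef
  have hc0 : ∀ a i, 0 ≤ c a i := fun a i => sq_nonneg _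
  have hn0 : ∀ a, 0 ≤ n a := fun a => Finset.sum_nonneg fun y _ => Complex.normSq_nonneg _
  -- F1
  have F1 : ∀ i, ∑ a, m a * c a i = 1 := by
    intro i
    have h := congrArg (fun M => star (ψ i) ⬝ᵥ M *ᵥ ψ i) hpovm
    rw [quad_sum, one_mulVec, hψ i] at h
    have h2 : ∑ a, ((m a * c a i : ℝ) : ℂ) = 1 := by
      rw [← h]
      apply Finset.sum_congr rfl; intro a _
      rw [quad_smul, quad_rank1]
      rw [hcdef]
      simp only [Complex.sq_norm]
      push_cast
      ring
    rw [← Complex.ofReal_sum] at h2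
    exact_mod_cast h2
  -- F2
  have F2 : ∑ a, m a * n a = (d₁ : ℝ) * d₂ := by
    have h := congrArg Matrix.trace hpovm
    rw [Matrix.trace_sum] at h
    rw [Matrix.trace_one] at h
    have h2 : ∑ a, ((m a * n a : ℝ) : ℂ) = ((Fintype.card (Fin d₁ × Fin d₂) : ℕ) : ℂ) := by
      rw [← h]
      apply Finset.sum_congr rfl; intro a _
      rw [Matrix.trace_smul, trace_rank1, smul_eq_mul]
      simp only [hndef, hu]
      push_cast
      ring
    rw [← Complex.ofReal_sum] at h2
    have h3 : ∑ a, m a * n a = ((Fintype.card (Fin d₁ × Fin d₂) : ℕ) : ℝ) := by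
      exact_mod_cast h2
    rw [h3]
    simp [Fintype.card_prod]
  -- product norm decomposition
  have hnn : ∀ a, n a = (∑ x, Complex.normSq (χ₁ a x)) * (∑ y, Complex.normSq (χ₂ a y)) := by
    intro a
    rw [Finset.sum_mul_sum]
    simp only [hndef, hu, prodv, Fintype.sum_prod_type, Complex.normSq_mul]
  -- F3 : Schmidt-coefficient bound
  have F3 : ∀ a i, c a i ≤ lam i * n a := by
    intro a i
    set n1 : ℝ := ∑ x, Complex.normSq (χ₁ a x) with hn1def
    set n2 : ℝ := ∑ y, Complex.normSq (χ₂ a y) with hn2def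
    have hn1nn : 0 ≤ n1 := Finset.sum_nonneg fun x _ => Complex.normSq_nonneg _
    have hn2nn : 0 ≤ n2 := Finset.sum_nonneg fun x _ => Complex.normSq_nonneg _
    rcases eq_or_lt_of_le hn1nn with h1 | h1
    · -- χ₁ a = 0
      have hz : ∀ x, χ₁ a x = 0 := by
        intro x
        have := (Finset.sum_eq_zero_iff_of_nonneg
          (fun x _ => Complex.normSq_nonneg (χ₁ a x))).mp h1.symm x (Finset.mem_univ x)
        exact Complex.normSq_eq_zero.mp this
      have hc : c a i = 0 := by
        have : star (ψ i) ⬝ᵥ u a = 0 := by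
          apply Finset.sum_eq_zero
          intro y _
          simp [hu, prodv, hz y.1]
        simp [hcdef, this]
      have hnz : n a = 0 := by rw [hnn a, ← hn1def, ← h1, zero_mul]
      rw [hc, hnz, mul_zero]
    rcases eq_or_lt_of_le hn2nn with h2 | h2
    · have hz : ∀ y, χ₂ a y = 0 := by
        intro y
        have := (Finset.sum_eq_zero_iff_of_nonneg
          (fun y _ => Complex.normSq_nonneg (χ₂ a y))).mp h2.symm y (Finset.mem_univ y)
        exact Complex.normSq_eq_zero.mp this
      have hc : c a i = 0 := by
        have : star (ψ i) ⬝ᵥ u a = 0 := by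
          apply Finset.sum_eq_zero
          intro y _
          simp [hu, prodv, hz y.2]
        simp [hcdef, this]
      have hnz : n a = 0 := by rw [hnn a, ← hn2def, ← h2, mul_zero]
      rw [hc, hnz, mul_zero]
    -- both positive: normalize
    set s1 : ℝ := Real.sqrt n1 with hs1def
    set s2 : ℝ := Real.sqrt n2 with hs2def
    have hs1pos : 0 < s1 := Real.sqrt_pos.mpr h1
    have hs2pos : 0 < s2 := Real.sqrt_pos.mpr h2
    have hs1sq : s1 * s1 = n1 := Real.mul_self_sqrt h1.le
    have hs2sq : s2 * s2 = n2 := Real.mul_self_sqrt h2.le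
    set a' : Fin d₁ → ℂ := ((s1 : ℂ))⁻¹ • χ₁ a with ha'
    set b' : Fin d₂ → ℂ := ((s2 : ℂ))⁻¹ • χ₂ a with hb'
    have hunit : ∀ {ι : Type} [Fintype ι] (v : ι → ℂ) (nv sv : ℝ),
        (∑ x, Complex.normSq (v x)) = nv → sv * sv = nv → 0 < sv →
        star (((sv : ℂ))⁻¹ • v) ⬝ᵥ (((sv : ℂ))⁻¹ • v) = 1 := by
      intro ι _ v nv sv hn hs hsp
      have hv : star v ⬝ᵥ v = (nv : ℂ) := by
        rw [← hn]
        push_cast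
        simp [dotProduct, Complex.normSq_eq_conj_mul_self, RCLike.star_def]
      rw [star_smul, smul_dotProduct, dotProduct_smul, hv, smul_eq_mul, smul_eq_mul]
      rw [star_inv₀]
      simp only [RCLike.star_def, Complex.conj_ofReal]
      have hsv : (sv : ℂ) ≠ 0 := by exact_mod_cast hsp.ne'
      field_simp
      rw [← hs]
      push_cast
      ring
    have hu1 : star a' ⬝ᵥ a' = 1 := hunit (χ₁ a) n1 s1 rfl hs1sq hs1pos
    have hu2 : star b' ⬝ᵥ b' = 1 := hunit (χ₂ a) n2 s2 rfl hs2sq hs2pos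
    have hmem : ‖star (ψ i) ⬝ᵥ prodv a' b'‖^2 ∈
        {x : ℝ | ∃ (aa : Fin d₁ → ℂ) (bb : Fin d₂ → ℂ),
          star aa ⬝ᵥ aa = 1 ∧ star bb ⬝ᵥ bb = 1 ∧
          x = ‖star (ψ i) ⬝ᵥ prodv aa bb‖^2} := ⟨a', b', hu1, hu2, rfl⟩
    have hB := (hlam i).2 hmem
    have hscale : prodv a' b' = (((s1 : ℂ))⁻¹ * ((s2 : ℂ))⁻¹) • u a := by
      funext y
      simp only [prodv, ha', hb', hu, Pi.smul_apply, smul_eq_mul]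
      ring
    have habs : ‖star (ψ i) ⬝ᵥ prodv a' b'‖^2
        = (s1⁻¹ * s2⁻¹)^2 * c a i := by
      rw [hscale, dotProduct_smul, smul_eq_mul, norm_mul, mul_pow, hcdef]
      congr 2
      simp [_root_.map_mul, map_inv₀, Complex.norm_real, abs_of_pos hs1pos, abs_of_pos hs2pos]
    rw [habs] at hB
    have hfin : (n1 * n2) * ((s1⁻¹ * s2⁻¹)^2 * c a i) ≤ (n1 * n2) * lam i :=
      mul_le_mul_of_nonneg_left hB (le_of_lt (mul_pos h1 h2))
    have hid : (n1 * n2) * ((s1⁻¹ * s2⁻¹)^2 * c a i) = c a i := by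
      rw [← hs1sq, ← hs2sq]
      field_simp
    rw [hid] at hfin
    rw [hnn a, ← hn1def, ← hn2def]
    linarith
  -- decoding function
  have hGex : ∀ a, ∃ i : Fin N, (Finset.univ.sup' (Finset.univ_nonempty_iff.mpr ⟨r⟩)
      fun i => p i * ‖star (ψ i) ⬝ᵥ prodv (χ₁ a) (χ₂ a)‖^2) = p i * c a i := by
    intro a
    obtain ⟨i, _, h⟩ := Finset.exists_mem_eq_sup' (Finset.univ_nonempty_iff.mpr ⟨r⟩)
      (fun i => p i * ‖star (ψ i) ⬝ᵥ prodv (χ₁ a) (χ₂ a)‖^2)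
    exact ⟨i, h⟩
  choose G hG using hGex
  set t : Fin N → ℝ :=
    fun i => ∑ a ∈ Finset.univ.filter (fun a => G a = i), m a * c a i with htdef
  set μ : Fin N → ℝ :=
    fun i => ∑ a ∈ Finset.univ.filter (fun a => G a = i), m a * n a with hμdef
  have hLHS : ∑ a, m a * (Finset.univ.sup' (Finset.univ_nonempty_iff.mpr ⟨r⟩)
      fun i => p i * ‖star (ψ i) ⬝ᵥ prodv (χ₁ a) (χ₂ a)‖^2)
      = ∑ i, p i * t i := by
    simp only [hG]
    rw [← Finset.sum_fiberwise Finset.univ G (fun a => m a * (p (G a) * c a (G a)))]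
    apply Finset.sum_congr rfl; intro i _
    rw [htdef]
    simp only
    rw [Finset.mul_sum]
    apply Finset.sum_congr rfl; intro a ha
    have hai : G a = i := (Finset.mem_filter.mp ha).2
    rw [hai]; ring
  have ht1 : ∀ i, t i ≤ 1 := by
    intro i
    rw [← F1 i, htdef]
    exact Finset.sum_le_sum_of_subset_of_nonneg (Finset.filter_subset _ _)
      (fun a _ _ => mul_nonneg (hm a).le (hc0 a i))
  have htμ : ∀ i, t i ≤ lam i * μ i := by
    intro i
    rw [hμdef, htdef]
    simp only
    rw [Finset.mul_sum]
    apply Finset.sum_le_sum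
    intro a _
    have h3 := F3 a i
    nlinarith [(hm a).le, hc0 a i]
  have ht0 : ∀ i, 0 ≤ t i :=
    fun i => Finset.sum_nonneg fun a _ => mul_nonneg (hm a).le (hc0 a i)
  have hμ0 : ∀ i, 0 ≤ μ i :=
    fun i => Finset.sum_nonneg fun a _ => mul_nonneg (hm a).le (hn0 a)
  have hμsum : ∑ i, μ i = (d₁ : ℝ) * d₂ := by
    rw [← F2, hμdef]
    exact Finset.sum_fiberwise _ _ _
  have key : ∀ i, p i * t i ≤ (if i < r then p i else 0)
      + p r * lam r * (μ i - (if i < r then (lam i)⁻¹ else 0)) := by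
    intro i
    have hpr : 0 ≤ p r * lam r := mul_nonneg (hp r) (hlampos r).le
    by_cases hi : i < r
    · simp only [if_pos hi]
      by_cases hμi : (lam i)⁻¹ ≤ μ i
      · have hpt : p i * t i ≤ p i * 1 := mul_le_mul_of_nonneg_left (ht1 i) (hp i)
        have := mul_nonneg hpr (sub_nonneg.mpr hμi)
        nlinarith
      · push_neg at hμi
        have h1 : p i * t i ≤ p i * (lam i * μ i) :=
          mul_le_mul_of_nonneg_left (htμ i) (hp i)
        have h2 : p r * lam r * ((lam i)⁻¹ - μ i) ≤ p i * lam i * ((lam i)⁻¹ - μ i) :=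
          mul_le_mul_of_nonneg_right (hord i r hi.le) (by linarith)
        have h3 : lam i * (lam i)⁻¹ = 1 := mul_inv_cancel₀ (hlampos i).ne'
        nlinarith [hp i]
    · simp only [if_neg hi]
      push_neg at hi
      have h1 : p i * t i ≤ p i * (lam i * μ i) :=
        mul_le_mul_of_nonneg_left (htμ i) (hp i)
      have h2 : p i * lam i * μ i ≤ p r * lam r * μ i :=
        mul_le_mul_of_nonneg_right (hord r i hi) (hμ0 i)
      nlinarith
  rw [hLHS]
  calc ∑ i, p i * t i
      ≤ ∑ i, ((if i < r then p i else 0)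
          + p r * lam r * (μ i - (if i < r then (lam i)⁻¹ else 0))) :=
        Finset.sum_le_sum fun i _ => key i
    _ = (∑ i ∈ Finset.univ.filter (fun i => i < r), p i) +
        p r * lam r * ((d₁ : ℝ) * d₂ -
          ∑ i ∈ Finset.univ.filter (fun i => i < r), (lam i)⁻¹) := by
        rw [Finset.sum_add_distrib]
        congr 1
        · rw [Finset.sum_filter]
        · rw [← Finset.mul_sum, Finset.sum_sub_distrib, hμsum, Finset.sum_filter]
end
end

section
/- Let {(p_i, |ψ_i⟩)} be an ensemble of pure states whose linear span has dimension r. Then for any POVM M = {m_a|χ_a⟩⟨χ_a|} and guessing strategy G: a ↦ |K_a⟩, the average fidelity F(M,G) = Σ_{a,i} p_i m_a |⟨ψ_i|χ_a⟩|² |⟨ψ_i|K_a⟩|² is at most the Ky Fan r-norm ‖ρ'‖_r^{KF} (the sum of the r largest eigenvalues) of ρ' = Σ_i p_i |ψ_i⟩⟨ψ_i| ⊗ |ψ_i⟩⟨ψ_i|. -/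
open Matrix Kronecker
open scoped BigOperators ComplexOrder

noncomputable section

set_option linter.unusedSectionVars false
open Matrix Kronecker
open scoped ComplexOrder

variable {l q : Type*} [Fintype l] [Fintype q] [DecidableEq l] [DecidableEq q]

lemma mul_vecMulVec' (A : Matrix l l ℂ) (v w : l → ℂ) :
    A * vecMulVec v w = vecMulVec (A *ᵥ v) w := by
  ext i j
  simp only [Matrix.mul_apply, vecMulVec_apply, Matrix.mulVec, dotProduct, Finset.sum_mul]
  exact Finset.sum_congr rfl fun k _ => by ring

lemma vecMulVec_mul' (A : Matrix l l ℂ) (v w : l → ℂ) :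
    vecMulVec v w * A = vecMulVec v (w ᵥ* A) := by
  ext i j
  simp only [Matrix.mul_apply, vecMulVec_apply, Matrix.vecMul, dotProduct, Finset.mul_sum]
  exact Finset.sum_congr rfl fun k _ => by ring

lemma vecMulVec_mulVec'_s16 (u w x : l → ℂ) :
    vecMulVec u w *ᵥ x = (w ⬝ᵥ x) • u := by
  ext i
  simp only [Matrix.mulVec, vecMulVec_apply, dotProduct, Pi.smul_apply, smul_eq_mul,
    Finset.sum_mul, Finset.mul_sum]
  exact Finset.sum_congr rfl fun k _ => by ring

lemma trace_vecMulVec' (v w : l → ℂ) : (vecMulVec v w).trace = v ⬝ᵥ w := by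
  simp [Matrix.trace, Matrix.diag, vecMulVec_apply, dotProduct]

lemma vecMulVec_mul_vecMulVec (a b c d : l → ℂ) :
    vecMulVec a b * vecMulVec c d = (b ⬝ᵥ c) • vecMulVec a d := by
  ext i j
  simp only [Matrix.mul_apply, vecMulVec_apply, dotProduct, Matrix.smul_apply, smul_eq_mul,
    Finset.sum_mul]
  exact Finset.sum_congr rfl fun k _ => by ring

lemma kron_conjTranspose (A : Matrix l l ℂ) (B : Matrix q q ℂ) :
    (A ⊗ₖ B)ᴴ = Aᴴ ⊗ₖ Bᴴ := by
  ext ⟨i, j⟩ ⟨k, s⟩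
  simp [conjTranspose_apply, kroneckerMap_apply]

lemma posSemidef_kron {A : Matrix l l ℂ} {B : Matrix q q ℂ}
    (hA : A.PosSemidef) (hB : B.PosSemidef) : (A ⊗ₖ B).PosSemidef := by
  exact hA.kronecker hB

lemma posSemidef_csmul {A : Matrix l l ℂ} (hA : A.PosSemidef) {c : ℝ} (hc : 0 ≤ c) :
    ((c : ℂ) • A).PosSemidef := by
  refine Matrix.PosSemidef.of_dotProduct_mulVec_nonneg ?_ ?_
  · unfold Matrix.IsHermitian
    rw [Matrix.conjTranspose_smul, hA.1]
    congr 1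
    simp
  · intro x
    have h := hA.dotProduct_mulVec_nonneg x
    have : star x ⬝ᵥ ((c : ℂ) • A) *ᵥ x = (c : ℂ) * (star x ⬝ᵥ A *ᵥ x) := by
      rw [Matrix.smul_mulVec, dotProduct_smul]; rfl
    rw [this]
    exact mul_nonneg (by exact_mod_cast Complex.zero_le_real.mpr hc) h

lemma posSemidef_of_idem {A : Matrix l l ℂ} (h1 : Aᴴ = A) (h2 : A * A = A) :
    A.PosSemidef := by
  have := Matrix.posSemidef_conjTranspose_mul_self A
  rwa [h1, h2] at this

lemma posSemidef_vecMulVec_star (u : l → ℂ) : (vecMulVec u (star u)).PosSemidef := by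
  refine Matrix.PosSemidef.of_dotProduct_mulVec_nonneg ?_ ?_
  · unfold Matrix.IsHermitian
    ext i j
    simp [conjTranspose_apply, vecMulVec_apply, mul_comm]
  · intro x
    have h : star x ⬝ᵥ (vecMulVec u (star u) *ᵥ x) = star (star u ⬝ᵥ x) * (star u ⬝ᵥ x) := by
      rw [vecMulVec_mulVec'_s16, dotProduct_smul, smul_eq_mul, mul_comm]
      congr 1
      rw [Matrix.star_dotProduct]
    rw [h]
    exact star_mul_self_nonneg _

lemma posSemidef_sum {ι : Type*} (s : Finset ι) (f : ι → Matrix l l ℂ)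
    (h : ∀ i ∈ s, (f i).PosSemidef) : (∑ i ∈ s, f i).PosSemidef := by
  classical
  induction s using Finset.induction_on with
  | empty => simpa using Matrix.PosSemidef.zero
  | insert _ _ hx ih =>
    rw [Finset.sum_insert hx]
    exact (h _ (Finset.mem_insert_self _ _)).add (ih fun i hi => h i (Finset.mem_insert_of_mem hi))


lemma exists_proj_matrix (n : ℕ) (S : Submodule ℂ (Fin n → ℂ)) :
    ∃ Q : Matrix (Fin n) (Fin n) ℂ, Qᴴ = Q ∧ Q * Q = Q ∧
      Q.trace = (Module.finrank ℂ S : ℂ) ∧ ∀ v ∈ S, Q *ᵥ v = v := by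
  let e : EuclideanSpace ℂ (Fin n) ≃ₗ[ℂ] (Fin n → ℂ) := WithLp.linearEquiv 2 ℂ (Fin n → ℂ)
  let S' : Submodule ℂ (EuclideanSpace ℂ (Fin n)) := S.comap e.toLinearMap
  let P' : EuclideanSpace ℂ (Fin n) →ₗ[ℂ] EuclideanSpace ℂ (Fin n) :=
    ((S'.starProjection : EuclideanSpace ℂ (Fin n) →L[ℂ] EuclideanSpace ℂ (Fin n)) :
      EuclideanSpace ℂ (Fin n) →ₗ[ℂ] EuclideanSpace ℂ (Fin n))
  let Pl : (Fin n → ℂ) →ₗ[ℂ] (Fin n → ℂ) := e.toLinearMap ∘ₗ P' ∘ₗ e.symm.toLinearMap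
  have hP'_mem : ∀ x, P' x ∈ S' := fun x => (S'.orthogonalProjection x).2
  have hP'_id : ∀ x ∈ S', P' x = x := fun x hx => S'.starProjection_eq_self_iff.mpr hx
  have hPl_mem : ∀ x, Pl x ∈ S := fun x => hP'_mem (e.symm x)
  have hPl_id : ∀ x ∈ S, Pl x = x := by
    intro x hx
    show e (P' (e.symm x)) = x
    rw [hP'_id _ (by show e (e.symm x) ∈ S; simpa using hx)]
    simp
  refine ⟨LinearMap.toMatrix' Pl, ?_, ?_, ?_, ?_⟩
  · -- hermitian
    have hsym : ∀ u v : EuclideanSpace ℂ (Fin n), inner ℂ (P' u) v = inner ℂ u (P' v) :=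
      fun u v => (S'.starProjection_isSymmetric) u v
    have hij : ∀ i j, LinearMap.toMatrix' Pl i j =
        inner ℂ (EuclideanSpace.single i (1 : ℂ)) (P' (EuclideanSpace.single j 1)) := by
      intro i j
      rw [EuclideanSpace.inner_single_left, _root_.map_one, one_mul,
        LinearMap.toMatrix'_apply]
      rfl
    ext i j
    rw [Matrix.conjTranspose_apply, hij j i, hij i j,
      show (star (inner ℂ (EuclideanSpace.single j (1 : ℂ)) (P' (EuclideanSpace.single i 1)))) =
        inner ℂ (P' (EuclideanSpace.single i 1)) (EuclideanSpace.single j (1 : ℂ)) from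
        inner_conj_symm _ _]
    exact hsym _ _
  · -- idempotent
    have h : Pl ∘ₗ Pl = Pl := LinearMap.ext fun x => hPl_id _ (hPl_mem x)
    rw [← LinearMap.toMatrix'_comp, h]
  · -- trace
    have hproj : LinearMap.IsProj S Pl := ⟨hPl_mem, hPl_id⟩
    have h1 := LinearMap.IsProj.trace hproj
    have h2 := LinearMap.trace_eq_matrix_trace ℂ (M := Fin n → ℂ)
      (Pi.basisFun ℂ (Fin n)) Pl
    rw [LinearMap.toMatrix_eq_toMatrix'] at h2
    exact h2.symm.trans h1
  · -- fixes S
    intro v hv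
    rw [← Matrix.toLin'_apply, Matrix.toLin'_toMatrix']
    exact hPl_id _ hv

lemma sum_kronecker' {ι l q : Type*} [Fintype l] [Fintype q] (s : Finset ι)
    (f : ι → Matrix l l ℂ) (B : Matrix q q ℂ) :
    (∑ i ∈ s, f i) ⊗ₖ B = ∑ i ∈ s, (f i ⊗ₖ B) := by
  ext ⟨i, j⟩ ⟨k, t⟩
  simp only [kroneckerMap_apply, Matrix.sum_apply, Finset.sum_mul]

lemma sub_kronecker' {l q : Type*} [Fintype l] [Fintype q]
    (A B : Matrix l l ℂ) (C : Matrix q q ℂ) :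
    (A - B) ⊗ₖ C = A ⊗ₖ C - B ⊗ₖ C := by
  ext ⟨i, j⟩ ⟨k, t⟩
  simp [kroneckerMap_apply, sub_mul]

lemma kronecker_sub' {l q : Type*} [Fintype l] [Fintype q]
    (A : Matrix l l ℂ) (B C : Matrix q q ℂ) :
    A ⊗ₖ (B - C) = A ⊗ₖ B - A ⊗ₖ C := by
  ext ⟨i, j⟩ ⟨k, t⟩
  simp [kroneckerMap_apply, mul_sub]

/-- Lemma 3: if the ensemble `{(pᵢ, ψᵢ)}` spans an `r`-dimensional subspace, then for
any rank-one POVM `{mₐ|χₐ⟩⟨χₐ|}` and guessing strategy `a ↦ |Kₐ⟩`, the average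
fidelity is at most the Ky Fan `r`-norm of `ρ' = ∑ᵢ pᵢ |ψᵢ⟩⟨ψᵢ| ⊗ |ψᵢ⟩⟨ψᵢ|`
(the sum of its `r` largest eigenvalues, characterized as the maximum of
`Tr(ρ'X)` over `0 ≤ X ≤ I` with `Tr X = r`). -/
theorem stmt16 (n N A : ℕ)
    (ψ : Fin N → (Fin n → ℂ)) (hψ : ∀ i, star (ψ i) ⬝ᵥ ψ i = 1)
    (p : Fin N → ℝ) (hp : ∀ i, 0 ≤ p i) (hpsum : ∑ i, p i = 1)
    (r : ℕ) (hr : Module.finrank ℂ (Submodule.span ℂ (Set.range ψ)) = r)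
    (KF : ℝ)
    (hKF : IsGreatest {x : ℝ | ∃ X : Matrix ((Fin n) × (Fin n)) ((Fin n) × (Fin n)) ℂ,
        X.PosSemidef ∧ (1 - X).PosSemidef ∧ X.trace = (r : ℂ) ∧
        x = (((∑ i, ((p i : ℝ) : ℂ) •
            ((Matrix.vecMulVec (ψ i) (star (ψ i))) ⊗ₖ
              (Matrix.vecMulVec (ψ i) (star (ψ i))))) * X).trace).re} KF)
    (m : Fin A → ℝ) (hm : ∀ a, 0 ≤ m a)
    (χ : Fin A → (Fin n → ℂ)) (hχ : ∀ a, star (χ a) ⬝ᵥ χ a = 1)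
    (hpovm : ∑ a, (m a : ℂ) • Matrix.vecMulVec (χ a) (star (χ a)) = 1)
    (K : Fin A → (Fin n → ℂ)) (hK : ∀ a, star (K a) ⬝ᵥ K a = 1) :
    ∑ a, ∑ i, p i * m a * ‖star (ψ i) ⬝ᵥ χ a‖^2 *
        ‖star (ψ i) ⬝ᵥ K a‖^2 ≤ KF := by
  classical
  obtain ⟨Q, hQherm, hQidem, htrQ, hQfix⟩ :=
    exists_proj_matrix n (Submodule.span ℂ (Set.range ψ))
  have hfinrank : Module.finrank ℂ
      (Submodule.span ℂ (Set.range ψ) : Submodule ℂ (Fin n → ℂ)) = r := hr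
  rw [hfinrank] at htrQ
  have hQψ : ∀ i, Q *ᵥ ψ i = ψ i := fun i =>
    hQfix _ (Submodule.subset_span (Set.mem_range_self i))
  -- abbreviations
  set χM : Fin A → Matrix (Fin n) (Fin n) ℂ := fun a => vecMulVec (χ a) (star (χ a)) with hχM
  set KM : Fin A → Matrix (Fin n) (Fin n) ℂ := fun a => vecMulVec (K a) (star (K a)) with hKM
  set vM : Fin A → Matrix (Fin n) (Fin n) ℂ :=
    fun a => vecMulVec (Q *ᵥ χ a) (star (Q *ᵥ χ a)) with hvM
  set ψM : Fin N → Matrix (Fin n) (Fin n) ℂ := fun i => vecMulVec (ψ i) (star (ψ i)) with hψM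
  have hstarχQ : ∀ a, star (χ a) ᵥ* Q = star (Q *ᵥ χ a) := by
    intro a
    rw [Matrix.star_mulVec, hQherm]
  have hstarψQ : ∀ i, star (ψ i) ᵥ* Q = star (ψ i) := by
    intro i
    rw [← hQψ i, Matrix.star_mulVec, hQherm, Matrix.vecMul_vecMul, hQidem]
  set X : Matrix (Fin n × Fin n) (Fin n × Fin n) ℂ :=
    ∑ a, (m a : ℂ) • (vM a ⊗ₖ KM a) with hX
  set Y : Matrix (Fin n × Fin n) (Fin n × Fin n) ℂ :=
    ∑ a, (m a : ℂ) • (χM a ⊗ₖ KM a) with hY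
  set Qb : Matrix (Fin n × Fin n) (Fin n × Fin n) ℂ :=
    Q ⊗ₖ (1 : Matrix (Fin n) (Fin n) ℂ) with hQb
  have hQbherm : Qbᴴ = Qb := by rw [hQb, kron_conjTranspose, hQherm, Matrix.conjTranspose_one]
  have hQbQb : Qb * Qb = Qb := by rw [hQb, ← Matrix.mul_kronecker_mul, hQidem, one_mul]
  -- X = Qb * Y * Qb
  have hXeq : X = Qb * Y * Qb := by
    rw [hX, hY, Finset.mul_sum, Finset.sum_mul]
    refine Finset.sum_congr rfl fun a _ => ?_
    rw [mul_smul_comm, smul_mul_assoc]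
    congr 1
    rw [hQb, ← Matrix.mul_kronecker_mul, ← Matrix.mul_kronecker_mul, one_mul, mul_one,
      hχM, hvM]
    congr 1
    simp only []
    rw [mul_vecMulVec', vecMulVec_mul', hstarχQ]
  -- PSD of X
  have hXpsd : X.PosSemidef := by
    rw [hX]
    exact posSemidef_sum _ _ fun a _ => posSemidef_csmul
      (posSemidef_kron (posSemidef_vecMulVec_star _) (posSemidef_vecMulVec_star _)) (hm a)
  -- PSD of 1 - X
  have hKMherm : ∀ a, (KM a)ᴴ = KM a := fun a => (posSemidef_vecMulVec_star (K a)).1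
  have hKMidem : ∀ a, KM a * KM a = KM a := by
    intro a
    rw [hKM]
    simp only []
    rw [_root_.vecMulVec_mul_vecMulVec, hK a, one_smul]
  have h1Y : (1 : Matrix (Fin n × Fin n) (Fin n × Fin n) ℂ) - Y =
      ∑ a, (m a : ℂ) • (χM a ⊗ₖ ((1 : Matrix (Fin n) (Fin n) ℂ) - KM a)) := by
    have h1 : (1 : Matrix (Fin n × Fin n) (Fin n × Fin n) ℂ) =
        ∑ a, (m a : ℂ) • (χM a ⊗ₖ (1 : Matrix (Fin n) (Fin n) ℂ)) := by
      rw [← Matrix.one_kronecker_one, ← hpovm, sum_kronecker']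
      exact Finset.sum_congr rfl fun a _ => Matrix.smul_kronecker _ _ _
    rw [hY, h1, ← Finset.sum_sub_distrib]
    refine Finset.sum_congr rfl fun a _ => ?_
    rw [kronecker_sub', smul_sub]
  have h1X : (1 : Matrix (Fin n × Fin n) (Fin n × Fin n) ℂ) - X =
      ((1 - Q) ⊗ₖ (1 : Matrix (Fin n) (Fin n) ℂ)) + Qb * (1 - Y) * Qb := by
    have hsub : ((1 - Q) ⊗ₖ (1 : Matrix (Fin n) (Fin n) ℂ)) = 1 - Qb := by
      rw [sub_kronecker', Matrix.one_kronecker_one, hQb]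
    rw [hXeq, hsub, mul_sub, sub_mul, mul_one, hQbQb]
    abel
  have h1Xpsd : ((1 : Matrix (Fin n × Fin n) (Fin n × Fin n) ℂ) - X).PosSemidef := by
    rw [h1X]
    have p1 : ((1 - Q) ⊗ₖ (1 : Matrix (Fin n) (Fin n) ℂ)).PosSemidef := by
      refine posSemidef_kron (posSemidef_of_idem ?_ ?_) Matrix.PosSemidef.one
      · rw [Matrix.conjTranspose_sub, Matrix.conjTranspose_one, hQherm]
      · rw [mul_sub, sub_mul, sub_mul, hQidem, mul_one, mul_one, one_mul]
        abel
    have p2 : (Qb * (1 - Y) * Qb).PosSemidef := by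
      have hy : ((1 : Matrix (Fin n × Fin n) (Fin n × Fin n) ℂ) - Y).PosSemidef := by
        rw [h1Y]
        refine posSemidef_sum _ _ fun a _ => posSemidef_csmul
          (posSemidef_kron (posSemidef_vecMulVec_star _) (posSemidef_of_idem ?_ ?_)) (hm a)
        · rw [Matrix.conjTranspose_sub, Matrix.conjTranspose_one, hKMherm]
        · simp only [hKM]
          rw [mul_sub, sub_mul, sub_mul, _root_.vecMulVec_mul_vecMulVec, hK a, one_smul,
            mul_one, mul_one, one_mul]
          abel
      have := hy.mul_mul_conjTranspose_same Qb
      rwa [hQbherm] at this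
    exact p1.add p2
  -- trace of X
  have hK1 : ∀ a, K a ⬝ᵥ star (K a) = 1 := fun a => (dotProduct_comm _ _).trans (hK a)
  have hXtr : X.trace = (r : ℂ) := by
    have hv : ∀ a, (Q *ᵥ χ a) ⬝ᵥ star (Q *ᵥ χ a) = star (χ a) ⬝ᵥ (Q *ᵥ χ a) := by
      intro a
      rw [dotProduct_comm, ← hstarχQ a, ← Matrix.dotProduct_mulVec, Matrix.mulVec_mulVec,
        hQidem]
    have key : ∀ a, (χM a * Q).trace = star (χ a) ⬝ᵥ (Q *ᵥ χ a) := by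
      intro a
      rw [hχM]
      simp only []
      rw [vecMulVec_mul', trace_vecMulVec', dotProduct_comm, ← Matrix.dotProduct_mulVec]
    have e1 : X.trace = ∑ a, (m a : ℂ) * (star (χ a) ⬝ᵥ (Q *ᵥ χ a)) := by
      rw [hX, Matrix.trace_sum]
      refine Finset.sum_congr rfl fun a _ => ?_
      rw [Matrix.trace_smul, Matrix.trace_kronecker, hvM, hKM]
      simp only []
      rw [trace_vecMulVec', trace_vecMulVec', hK1 a, mul_one, hv a, smul_eq_mul]
    have e2 : ((1 : Matrix (Fin n) (Fin n) ℂ) * Q).trace =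
        ∑ a, (m a : ℂ) * (star (χ a) ⬝ᵥ (Q *ᵥ χ a)) := by
      rw [← hpovm, Finset.sum_mul, Matrix.trace_sum]
      refine Finset.sum_congr rfl fun a _ => ?_
      rw [smul_mul_assoc, Matrix.trace_smul, key a, smul_eq_mul]
    rw [e1, ← e2, one_mul, htrQ]
  -- value
  have t1 : ∀ i a, (ψM i * vM a).trace =
      ((‖star (ψ i) ⬝ᵥ χ a‖^2 : ℝ) : ℂ) := by
    intro i a
    have hz : star (ψ i) ⬝ᵥ (Q *ᵥ χ a) = star (ψ i) ⬝ᵥ χ a := by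
      rw [Matrix.dotProduct_mulVec, hstarψQ i]
    rw [hψM, hvM]
    simp only []
    rw [_root_.vecMulVec_mul_vecMulVec, Matrix.trace_smul, trace_vecMulVec', smul_eq_mul]
    rw [show ψ i ⬝ᵥ star (Q *ᵥ χ a) = star (star (ψ i) ⬝ᵥ (Q *ᵥ χ a)) from ?_]
    · rw [hz, Complex.star_def, Complex.mul_conj, ← Complex.sq_norm]
    · rw [Matrix.star_dotProduct, star_star, dotProduct_comm]
  have t2 : ∀ i a, (ψM i * KM a).trace =
      ((‖star (ψ i) ⬝ᵥ K a‖^2 : ℝ) : ℂ) := by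
    intro i a
    rw [hψM, hKM]
    simp only []
    rw [_root_.vecMulVec_mul_vecMulVec, Matrix.trace_smul, trace_vecMulVec', smul_eq_mul]
    rw [show ψ i ⬝ᵥ star (K a) = star (star (ψ i) ⬝ᵥ K a) from ?_]
    · rw [Complex.star_def, Complex.mul_conj, ← Complex.sq_norm]
    · rw [Matrix.star_dotProduct, star_star, dotProduct_comm]
  apply hKF.2
  refine ⟨X, hXpsd, h1Xpsd, hXtr, ?_⟩
  have etr : ((∑ i, ((p i : ℝ) : ℂ) • (ψM i ⊗ₖ ψM i)) * X).trace =
      ((∑ a, ∑ i, p i * m a * ‖star (ψ i) ⬝ᵥ χ a‖^2 *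
        ‖star (ψ i) ⬝ᵥ K a‖^2 : ℝ) : ℂ) := by
    rw [hX, Finset.sum_mul_sum, Finset.sum_comm, Matrix.trace_sum, Complex.ofReal_sum]
    refine Finset.sum_congr rfl fun a _ => ?_
    rw [Matrix.trace_sum, Complex.ofReal_sum]
    refine Finset.sum_congr rfl fun i _ => ?_
    rw [smul_mul_assoc, mul_smul_comm, ← Matrix.mul_kronecker_mul, Matrix.trace_smul,
      Matrix.trace_smul, Matrix.trace_kronecker, t1, t2]
    simp only [smul_eq_mul]
    push_cast
    ring
  rw [etr, Complex.ofReal_re]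
end
end

section
/- For the equally likely ensemble S₂ = {|00⟩, |11⟩, (|00⟩+|11⟩)/√2, (|00⟩−|11⟩)/√2} in ℂ²⊗ℂ², the optimal average fidelity over all measurements equals 3/4, and it is attained by the local computational-basis measurement. -/
open Matrix
open scoped BigOperators ComplexOrder

noncomputable section

/-- The ensemble `S₂ = {|00⟩, |11⟩, (|00⟩+|11⟩)/√2, (|00⟩−|11⟩)/√2}` in `ℂ²⊗ℂ²`. -/
def S₂ : Fin 4 → (Fin 2 × Fin 2 → ℂ) :=
  ![fun y => if y = (0, 0) then 1 else 0,
    fun y => if y = (1, 1) then 1 else 0,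
    fun y => if y = (0, 0) then ((Real.sqrt 2)⁻¹ : ℂ)
             else if y = (1, 1) then ((Real.sqrt 2)⁻¹ : ℂ) else 0,
    fun y => if y = (0, 0) then ((Real.sqrt 2)⁻¹ : ℂ)
             else if y = (1, 1) then -((Real.sqrt 2)⁻¹ : ℂ) else 0]

private lemma expand_inner (N : Matrix (Fin 2 × Fin 2) (Fin 2 × Fin 2) ℂ)
    (φ : Fin 2 × Fin 2 → ℂ) :
    ∑ i, (4 : ℝ)⁻¹ * (star (S₂ i) ⬝ᵥ N.mulVec (S₂ i)).re *
        ‖star (S₂ i) ⬝ᵥ φ‖^2 =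
      (4:ℝ)⁻¹ * ((N (0,0) (0,0)).re * Complex.normSq (φ (0,0))
        + (N (1,1) (1,1)).re * Complex.normSq (φ (1,1))
        + ((N (0,0) (0,0)).re + (N (1,1) (1,1)).re) *
            (Complex.normSq (φ (0,0)) + Complex.normSq (φ (1,1))) / 2
        + (N (0,0) (1,1) + N (1,1) (0,0)).re *
            (φ (0,0) * (starRingEnd ℂ) (φ (1,1))).re) := by
  simp only [Fin.sum_univ_four, S₂, Matrix.cons_val_zero, Matrix.cons_val_one,
    Matrix.head_cons, Matrix.cons_val_two, Matrix.tail_cons, Matrix.cons_val_three,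
    dotProduct, mulVec, Pi.star_apply, Fintype.sum_prod_type, Fin.sum_univ_two,
    Complex.sq_norm]
  norm_num [Prod.ext_iff]
  simp only [← Complex.ofReal_inv, Complex.normSq_apply, Complex.add_re, Complex.add_im,
    Complex.mul_re, Complex.mul_im, Complex.conj_re, Complex.conj_im, Complex.ofReal_re,
    Complex.ofReal_im, Complex.neg_re, Complex.neg_im, Complex.sub_re, Complex.sub_im]
  ring_nf
  have h1 : (Real.sqrt 2:ℝ)^2 = 2 := Real.sq_sqrt (by norm_num)
  have h2 : ((Real.sqrt 2)⁻¹:ℝ)^2 = 1/2 := by rw [inv_pow, h1]; norm_num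
  simp only [h1, h2]
  ring

private lemma cross_le (N : Matrix (Fin 2 × Fin 2) (Fin 2 × Fin 2) ℂ) (hN : N.PosSemidef)
    (φ : Fin 2 × Fin 2 → ℂ) :
    (N (0,0) (1,1) + N (1,1) (0,0)).re * (φ (0,0) * (starRingEnd ℂ) (φ (1,1))).re ≤
      Complex.normSq (φ (1,1)) * (N (0,0) (0,0)).re
      + Complex.normSq (φ (0,0)) * (N (1,1) (1,1)).re := by
  set x1 : Fin 2 × Fin 2 → ℂ :=
    fun y => if y = (0,0) then φ (1,1) else if y = (1,1) then -(φ (0,0)) else 0 with hx1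
  set x2 : Fin 2 × Fin 2 → ℂ :=
    fun y => if y = (0,0) then (starRingEnd ℂ) (φ (1,1))
             else if y = (1,1) then -((starRingEnd ℂ) (φ (0,0))) else 0 with hx2
  have h1 : 0 ≤ (star x1 ⬝ᵥ N.mulVec x1).re := (Complex.le_def.mp (hN.dotProduct_mulVec_nonneg x1)).1
  have h2 : 0 ≤ (star x2 ⬝ᵥ N.mulVec x2).re := (Complex.le_def.mp (hN.dotProduct_mulVec_nonneg x2)).1
  have key : (star x1 ⬝ᵥ N.mulVec x1).re + (star x2 ⬝ᵥ N.mulVec x2).re =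
      2 * (Complex.normSq (φ (1,1)) * (N (0,0) (0,0)).re
        + Complex.normSq (φ (0,0)) * (N (1,1) (1,1)).re)
      - 2 * ((N (0,0) (1,1) + N (1,1) (0,0)).re *
          (φ (0,0) * (starRingEnd ℂ) (φ (1,1))).re) := by
    simp only [hx1, hx2, dotProduct, mulVec, Pi.star_apply, Fintype.sum_prod_type,
      Fin.sum_univ_two]
    norm_num [Prod.ext_iff]
    simp only [Complex.normSq_apply, Complex.add_re, Complex.add_im,
      Complex.mul_re, Complex.mul_im, Complex.conj_re, Complex.conj_im,
      Complex.neg_re, Complex.neg_im, Complex.sub_re, Complex.sub_im]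
    ring
  linarith

private lemma diag_nonneg (N : Matrix (Fin 2 × Fin 2) (Fin 2 × Fin 2) ℂ) (hN : N.PosSemidef)
    (u : Fin 2 × Fin 2) : 0 ≤ (N u u).re := by
  have h := (Complex.le_def.mp (hN.dotProduct_mulVec_nonneg (fun y => if y = u then 1 else 0))).1
  simpa [dotProduct, mulVec, apply_ite] using h

private lemma norm_le (φ : Fin 2 × Fin 2 → ℂ) (hφ : star φ ⬝ᵥ φ = 1) :
    Complex.normSq (φ (0,0)) + Complex.normSq (φ (1,1)) ≤ 1 := by
  have h := congrArg Complex.re hφ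
  simp only [dotProduct, Pi.star_apply, Fintype.sum_prod_type, Fin.sum_univ_two,
    Complex.add_re, Complex.one_re] at h
  have e : ∀ z : ℂ, (star z * z).re = Complex.normSq z := by
    intro z
    rw [RCLike.star_def, mul_comm, Complex.mul_conj]; simp
  rw [e, e, e, e] at h
  nlinarith [Complex.normSq_nonneg (φ (0,1)), Complex.normSq_nonneg (φ (1,0))]

private lemma inner_le (N : Matrix (Fin 2 × Fin 2) (Fin 2 × Fin 2) ℂ) (hN : N.PosSemidef)
    (φ : Fin 2 × Fin 2 → ℂ) (hφ : star φ ⬝ᵥ φ = 1) :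
    ∑ i, (4 : ℝ)⁻¹ * (star (S₂ i) ⬝ᵥ N.mulVec (S₂ i)).re *
        ‖star (S₂ i) ⬝ᵥ φ‖^2 ≤
      3/8 * ((N (0,0) (0,0)).re + (N (1,1) (1,1)).re) := by
  rw [expand_inner]
  have hc := cross_le N hN φ
  have hp := diag_nonneg N hN (0,0)
  have hq := diag_nonneg N hN (1,1)
  have hst := norm_le φ hφ
  have hs := Complex.normSq_nonneg (φ (0,0))
  have ht := Complex.normSq_nonneg (φ (1,1))
  nlinarith [mul_nonneg (by linarith : (0:ℝ) ≤ (N (0,0) (0,0)).re + (N (1,1) (1,1)).re)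
    (by linarith : (0:ℝ) ≤ 1 - (Complex.normSq (φ (0,0)) + Complex.normSq (φ (1,1))))]

private def g4 : Fin 4 → Fin 2 × Fin 2 := ![(0,0), (1,1), (0,1), (1,0)]

/-- For the equally likely ensemble `S₂`, the optimal average fidelity over all
measurements and guessing strategies equals `3/4`, and it is attained by the local
computational-basis measurement (with a suitable guessing strategy). -/
theorem stmt18 :
    IsGreatest {x : ℝ | ∃ (A : ℕ) (M : Fin A → Matrix (Fin 2 × Fin 2) (Fin 2 × Fin 2) ℂ)
        (φ : Fin A → (Fin 2 × Fin 2 → ℂ)),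
      (∀ a, (M a).PosSemidef) ∧ (∑ a, M a = 1) ∧ (∀ a, star (φ a) ⬝ᵥ φ a = 1) ∧
      x = ∑ a, ∑ i, (4 : ℝ)⁻¹ * (star (S₂ i) ⬝ᵥ (M a).mulVec (S₂ i)).re *
            ‖star (S₂ i) ⬝ᵥ φ a‖^2} (3 / 4) ∧
    (∃ φ : Fin 2 × Fin 2 → (Fin 2 × Fin 2 → ℂ), (∀ a, star (φ a) ⬝ᵥ φ a = 1) ∧
      ∑ a : Fin 2 × Fin 2, ∑ i : Fin 4,
          (4 : ℝ)⁻¹ * ‖S₂ i a‖^2 *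
            ‖star (S₂ i) ⬝ᵥ φ a‖^2 = 3 / 4) := by
  refine ⟨⟨?_, ?_⟩, ?_⟩
  · -- membership: the computational-basis measurement achieves 3/4
    refine ⟨4, fun a => Matrix.of (fun y y' => if y = g4 a ∧ y' = g4 a then 1 else 0),
      fun a y => if y = g4 a then 1 else 0, ?_, ?_, ?_, ?_⟩
    · intro a
      refine Matrix.PosSemidef.of_dotProduct_mulVec_nonneg ?_ ?_
      · ext y y'
        simp [Matrix.conjTranspose_apply, apply_ite, and_comm]
      · intro x
        have : star x ⬝ᵥ (Matrix.of (fun y y' =>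
            if y = g4 a ∧ y' = g4 a then (1:ℂ) else 0)).mulVec x
            = (Complex.normSq (x (g4 a)) : ℂ) := by
          simp only [dotProduct, mulVec, Matrix.of_apply, Pi.star_apply]
          rw [Finset.sum_eq_single (g4 a) (by intro b _ hb; simp [hb]) (by simp)]
          rw [Finset.sum_eq_single (g4 a) (by intro b _ hb; simp [hb]) (by simp)]
          simp [RCLike.star_def, mul_comm, Complex.mul_conj]
        rw [this]
        exact_mod_cast Complex.zero_le_real.mpr (Complex.normSq_nonneg _)
    · ext y y'
      simp only [Matrix.sum_apply, Fin.sum_univ_four, Matrix.of_apply, Matrix.one_apply]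
      fin_cases y <;> fin_cases y' <;> norm_num [g4, Prod.ext_iff, Matrix.cons_val_two, Matrix.cons_val_three, Matrix.tail_cons, Matrix.head_cons]
    · intro a
      simp [dotProduct, Pi.star_apply, apply_ite, Fintype.sum_prod_type, Fin.sum_univ_two]
    · rw [Fin.sum_univ_four, expand_inner, expand_inner, expand_inner, expand_inner]
      norm_num [g4, Prod.ext_iff, Complex.normSq_apply, Matrix.cons_val_two, Matrix.cons_val_three, Matrix.tail_cons, Matrix.head_cons]
  · -- upper bound
    rintro x ⟨A, M, φ, hPSD, hsum, hφ, rfl⟩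
    have hbound : ∀ a, ∑ i, (4 : ℝ)⁻¹ * (star (S₂ i) ⬝ᵥ (M a).mulVec (S₂ i)).re *
        ‖star (S₂ i) ⬝ᵥ φ a‖^2 ≤
        3/8 * (((M a) (0,0) (0,0)).re + ((M a) (1,1) (1,1)).re) :=
      fun a => inner_le (M a) (hPSD a) (φ a) (hφ a)
    calc ∑ a, ∑ i, (4 : ℝ)⁻¹ * (star (S₂ i) ⬝ᵥ (M a).mulVec (S₂ i)).re *
            ‖star (S₂ i) ⬝ᵥ φ a‖^2
        ≤ ∑ a, 3/8 * (((M a) (0,0) (0,0)).re + ((M a) (1,1) (1,1)).re) :=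
          Finset.sum_le_sum (fun a _ => hbound a)
      _ = 3/4 := by
          have h00 : ∑ a, ((M a) (0,0) (0,0)).re = 1 := by
            have h : (∑ a, M a) (0,0) (0,0) = (1 : Matrix (Fin 2 × Fin 2) (Fin 2 × Fin 2) ℂ)
                (0,0) (0,0) := by rw [hsum]
            simp only [Matrix.sum_apply, Matrix.one_apply_eq] at h
            have := congrArg Complex.re h
            simpa [Complex.re_sum] using this
          have h11 : ∑ a, ((M a) (1,1) (1,1)).re = 1 := by
            have h : (∑ a, M a) (1,1) (1,1) = (1 : Matrix (Fin 2 × Fin 2) (Fin 2 × Fin 2) ℂ)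
                (1,1) (1,1) := by rw [hsum]
            simp only [Matrix.sum_apply, Matrix.one_apply_eq] at h
            have := congrArg Complex.re h
            simpa [Complex.re_sum] using this
          rw [← Finset.mul_sum, Finset.sum_add_distrib, h00, h11]
          norm_num
  · -- explicit local measurement part
    refine ⟨fun a y => if y = a then 1 else 0, ?_, ?_⟩
    · intro a
      simp [dotProduct, Pi.star_apply, apply_ite, Fintype.sum_prod_type, Fin.sum_univ_two]
    · simp only [Fintype.sum_prod_type, Fin.sum_univ_two, Fin.sum_univ_four, S₂,
        Matrix.cons_val_zero, Matrix.cons_val_one, Matrix.head_cons, Matrix.cons_val_two,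
        Matrix.tail_cons, Matrix.cons_val_three, dotProduct, Pi.star_apply]
      norm_num [Prod.ext_iff]
end
end
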